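/- Let M_n ⊆ R_n be the set of multisegments with at most one cut per column, and M = ⊔ M_n. If M ∈ M_{p+q} has a special full column at p, then M = (leftRestrict p M) * (rightRestrict q M); consequently, concatenation gives a bijection from M_p × M_q onto the set of multisegments in M_{p+q} having a special full column at p. -/

import Mathlib

/-- A segment is an interval `[i,j]` of positive integers, encoded as the
pair `(i, j)` with `1 ≤ i ≤ j`.  A multisegment is a multiset of segments. -/
abbrev Seg := ℕ × ℕ

/-- The weight of the multisegment `M` at `k`: the number of segments of `M`
containing `k`. -/
def wt (M : Multiset Seg) (k : ℕ) : ℕ :=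
  (M.filter (fun s => s.1 ≤ k ∧ k ≤ s.2)).card

/-- `M` belongs to `R_n`: all its members are segments contained in `[1,n]`,
and its weight is `(n+1, …, n+1)`. -/
def InR (n : ℕ) (M : Multiset Seg) : Prop :=
  (∀ s ∈ M, 1 ≤ s.1 ∧ s.1 ≤ s.2 ∧ s.2 ≤ n) ∧
  ∀ k, 1 ≤ k → k ≤ n → wt M k = n + 1

/-- Concatenation of multisegments `M ∈ R_p` and `N ∈ R_q`: keep the segments
of `M` ending before `p` and those of `N` (shifted by `p`) starting after `1`,
and glue the segments of `M` ending at `p` (padded with `q` copies of `[1,p]`)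
to the segments of `N` starting at `1` (padded with `p` copies of `[1,q]`),
matching shortest with shortest. -/
def concatMS (p q : ℕ) (M N : Multiset Seg) : Multiset Seg :=
  if p = 0 then N
  else if q = 0 then M
  else
    M.filter (fun s => s.2 < p)
      + (N.filter (fun s => 1 < s.1)).map (fun s => (s.1 + p, s.2 + p))
      + ↑(List.map (fun x : ℕ × ℕ => (x.1, x.2 + p))
          (List.zip
            ((((M.filter (fun s : Seg => s.2 = p)).map Prod.fst
                + Multiset.replicate q 1).sort (· ≤ ·)).reverse)
            ((((N.filter (fun s : Seg => s.1 = 1)).map Prod.snd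
                + Multiset.replicate p q).sort (· ≤ ·)))))

/-- Suspension of a multisegment `M ∈ R_n`: each segment is pushed inward
(`[i,j] ↦ [i+1,j+1]`, keeping start `1` at `1` and sending end `n` to `n+2`)
and the four segments `[1,1]`, `[2,n+2]`, `[1,n+1]`, `[n+2,n+2]` are added;
the suspension of the empty multisegment is `{[1,1],[2,2],[1,2]}`. -/
def suspMS (n : ℕ) (M : Multiset Seg) : Multiset Seg :=
  if n = 0 then {(1, 1), (2, 2), (1, 2)}
  else
    M.map (fun s => (if s.1 = 1 then 1 else s.1 + 1, if s.2 = n then n + 2 else s.2 + 1))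
      + {(1, 1), (2, n + 2), (1, n + 1), (n + 2, n + 2)}

/-- The `k`-th column of `M` is full: the number of segments of `M` containing
both `k` and `k+1` equals `min (w_k, w_{k+1})`. -/
def fullAt (M : Multiset Seg) (k : ℕ) : Prop :=
  (M.filter (fun s : Seg => s.1 ≤ k ∧ k + 1 ≤ s.2)).card = min (wt M k) (wt M (k + 1))

/-- `M` has a special full column at `k`: the `k`-th column is full and any
two segments of `M` containing the column `k` are comparable by inclusion. -/
def specialFullAt (M : Multiset Seg) (k : ℕ) : Prop :=
  fullAt M k ∧ ∀ A ∈ M, ∀ B ∈ M, (A.1 ≤ k ∧ k + 1 ≤ A.2) → (B.1 ≤ k ∧ k + 1 ≤ B.2) →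
    ((B.1 ≤ A.1 ∧ A.2 ≤ B.2) ∨ (A.1 ≤ B.1 ∧ B.2 ≤ A.2))

/-- `M` belongs to `M_n ⊆ R_n`: it has at most one cut per column, i.e. for
each column `k` the number of segments containing both `k` and `k+1` is at
least `min (w_k, w_{k+1}) - 1`. -/
def InM (n : ℕ) (M : Multiset Seg) : Prop :=
  InR n M ∧ ∀ k, 1 ≤ k → k < n →
    min (wt M k) (wt M (k + 1))
      ≤ (M.filter (fun s : Seg => s.1 ≤ k ∧ k + 1 ≤ s.2)).card + 1

/-- The left restriction of `M ∈ M_n` to `k`: truncate every segment at `k`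
and remove `n - k` copies of `[1,k]`. -/
def leftRes (n k : ℕ) (M : Multiset Seg) : Multiset Seg :=
  ((M.filter (fun s : Seg => s.1 ≤ k)).map (fun s : Seg => (s.1, min s.2 k)))
    - Multiset.replicate (n - k) (1, k)

/-- The right restriction of `M ∈ M_n` to `k`: keep the last `k` vertices,
truncating segments on the left and renumbering, and remove `n - k` copies of
`[1,k]`. -/
def rightRes (n k : ℕ) (M : Multiset Seg) : Multiset Seg :=
  ((M.filter (fun s : Seg => n - k + 1 ≤ s.2)).map
      (fun s : Seg => (max s.1 (n - k + 1) - (n - k), s.2 - (n - k))))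
    - Multiset.replicate (n - k) (1, k)

namespace StmtAux

/-- number of segments crossing column k -/
def crs (M : Multiset Seg) (k : ℕ) : ℕ :=
  (M.filter (fun s : Seg => s.1 ≤ k ∧ k + 1 ≤ s.2)).card

lemma wt_add (M N : Multiset Seg) (k : ℕ) : wt (M + N) k = wt M k + wt N k := by
  simp [wt, Multiset.filter_add]

lemma crs_add (M N : Multiset Seg) (k : ℕ) : crs (M + N) k = crs M k + crs N k := by
  simp [crs, Multiset.filter_add]

lemma card_filter_replicate {α : Type*} (P : α → Prop) [DecidablePred P] (m : ℕ) (a : α) :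
    ((Multiset.replicate m a).filter P).card = if P a then m else 0 := by
  split_ifs with h
  · rw [Multiset.filter_eq_self.mpr fun b hb => (Multiset.eq_of_mem_replicate hb) ▸ h,
      Multiset.card_replicate]
  · rw [Multiset.filter_eq_nil.mpr fun b hb => (Multiset.eq_of_mem_replicate hb) ▸ h,
      Multiset.card_zero]

lemma wt_map_eq_card_filter (f : Seg → Seg) (M : Multiset Seg) (k : ℕ) :
    wt (M.map f) k = (M.filter (fun s => (f s).1 ≤ k ∧ k ≤ (f s).2)).card := by
  rw [wt, ← Multiset.countP_eq_card_filter, Multiset.countP_map]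

lemma crs_map_eq_card_filter (f : Seg → Seg) (M : Multiset Seg) (k : ℕ) :
    crs (M.map f) k = (M.filter (fun s => (f s).1 ≤ k ∧ k + 1 ≤ (f s).2)).card := by
  rw [crs, ← Multiset.countP_eq_card_filter, Multiset.countP_map]

/-- comparability (nesting) of two segments -/
def Cmp (a b : Seg) : Prop := (b.1 ≤ a.1 ∧ a.2 ≤ b.2) ∨ (a.1 ≤ b.1 ∧ b.2 ≤ a.2)

/-- a multiset of pairwise nested segments -/
def IsNest (C : Multiset Seg) : Prop := ∀ a ∈ C, ∀ b ∈ C, Cmp a b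

lemma IsNest.mono {C D : Multiset Seg} (h : IsNest D) (hle : C ≤ D) : IsNest C :=
  fun a ha b hb => h a (Multiset.mem_of_le hle ha) b (Multiset.mem_of_le hle hb)

lemma exists_innermost (C : Multiset Seg) (h : IsNest C) (hne : C ≠ 0) :
    ∃ c ∈ C, ∀ d ∈ C, d.1 ≤ c.1 ∧ c.2 ≤ d.2 := by
  induction C using Multiset.induction with
  | empty => exact absurd rfl hne
  | cons a s ih =>
    rcases eq_or_ne s 0 with rfl | hs
    · exact ⟨a, Multiset.mem_cons_self a 0, by
        intro d hd
        rw [Multiset.mem_cons] at hd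
        rcases hd with rfl | hd
        · exact ⟨le_rfl, le_rfl⟩
        · simp at hd⟩
    · obtain ⟨c, hc, hcin⟩ := ih (h.mono (Multiset.le_cons_self s a)) hs
      rcases h a (Multiset.mem_cons_self a s) c (Multiset.mem_cons_of_mem hc) with hca | hac
      · -- c.1 ≤ a.1, a.2 ≤ c.2 : a is inner
        refine ⟨a, Multiset.mem_cons_self a s, ?_⟩
        intro d hd
        rw [Multiset.mem_cons] at hd
        rcases hd with rfl | hd
        · exact ⟨le_rfl, le_rfl⟩
        · exact ⟨le_trans (hcin d hd).1 hca.1, le_trans hca.2 (hcin d hd).2⟩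
      · -- a.1 ≤ c.1, c.2 ≤ a.2 : c stays inner
        refine ⟨c, Multiset.mem_cons_of_mem hc, ?_⟩
        intro d hd
        rw [Multiset.mem_cons] at hd
        rcases hd with rfl | hd
        · exact ⟨hac.1, hac.2⟩
        · exact hcin d hd

lemma zip_nest (X Y : List ℕ) (hX : X.Pairwise (· ≥ ·)) (hY : Y.Pairwise (· ≤ ·)) :
    IsNest ↑(X.zip Y) := by
  induction X generalizing Y with
  | nil => intro a ha; simp at ha
  | cons x X ih =>
    cases Y with
    | nil => intro a ha; simp at ha
    | cons y Y =>
      intro a ha b hb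
      rw [List.zip_cons_cons] at ha hb
      rw [Multiset.mem_coe, List.mem_cons] at ha hb
      have hmem : ∀ c : Seg, c ∈ X.zip Y → c.1 ≤ x ∧ y ≤ c.2 := by
        intro c hc
        obtain ⟨h1, h2⟩ := List.of_mem_zip hc
        exact ⟨List.rel_of_pairwise_cons hX h1, List.rel_of_pairwise_cons hY h2⟩
      rcases ha with rfl | ha <;> rcases hb with rfl | hb
      · exact Or.inl ⟨le_rfl, le_rfl⟩
      · exact Or.inl ⟨(hmem b hb).1, (hmem b hb).2⟩
      · exact Or.inr ⟨(hmem a ha).1, (hmem a ha).2⟩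
      · exact ih Y hX.of_cons hY.of_cons a (Multiset.mem_coe.mpr ha) b
          (Multiset.mem_coe.mpr hb)


lemma zip_chain_eq (X : List ℕ) : ∀ (C : Multiset Seg) (Y : List ℕ), IsNest C →
    X.Pairwise (· ≥ ·) → Y.Pairwise (· ≤ ·) →
    (X : Multiset ℕ) = C.map Prod.fst → (Y : Multiset ℕ) = C.map Prod.snd →
    (↑(X.zip Y) : Multiset Seg) = C := by
  induction X with
  | nil =>
    intro C Y _ _ _ hX hY
    have : C = 0 := by
      have := congrArg Multiset.card hX
      simpa using this.symm
    subst this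
    simp
  | cons x X ih =>
    intro C Y hC hXs hYs hX hY
    have hCne : C ≠ 0 := by
      intro h
      subst h
      simp at hX
    obtain ⟨c, hc, hcin⟩ := exists_innermost C hC hCne
    -- x = c.1
    have hx : c.1 = x := by
      have hx1 : x ∈ C.map Prod.fst := by rw [← hX]; simp
      obtain ⟨d, hd, hdx⟩ := Multiset.mem_map.mp hx1
      have h1 : x ≤ c.1 := hdx ▸ (hcin d hd).1
      have h2 : c.1 ≤ x := by
        have : c.1 ∈ (↑(x :: X) : Multiset ℕ) := by
          rw [hX]; exact Multiset.mem_map_of_mem _ hc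
        rw [Multiset.mem_coe, List.mem_cons] at this
        rcases this with h | h
        · exact le_of_eq h
        · exact List.rel_of_pairwise_cons hXs h
      exact le_antisymm h2 h1
    cases Y with
    | nil =>
      exfalso
      have := congrArg Multiset.card hY
      have hcard := congrArg Multiset.card hX
      simp at this hcard
      omega
    | cons y Y' =>
      have hy : c.2 = y := by
        have hy1 : y ∈ C.map Prod.snd := by rw [← hY]; simp
        obtain ⟨d, hd, hdy⟩ := Multiset.mem_map.mp hy1
        have h1 : c.2 ≤ y := hdy ▸ (hcin d hd).2
        have h2 : y ≤ c.2 := by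
          have : c.2 ∈ (↑(y :: Y') : Multiset ℕ) := by
            rw [hY]; exact Multiset.mem_map_of_mem _ hc
          rw [Multiset.mem_coe, List.mem_cons] at this
          rcases this with h | h
          · exact le_of_eq h.symm
          · exact List.rel_of_pairwise_cons hYs h
        exact le_antisymm h1 h2
      have hceq : c = (x, y) := by
        rw [← hx, ← hy]
      have hCdec : C = c ::ₘ C.erase c := (Multiset.cons_erase hc).symm
      have hrest : (↑(X.zip Y') : Multiset Seg) = C.erase c := by
        apply ih (C.erase c) Y' (hC.mono (Multiset.erase_le c C)) hXs.of_cons hYs.of_cons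
        · have : (↑(x :: X) : Multiset ℕ) = (c ::ₘ C.erase c).map Prod.fst := by
            rw [← hCdec]; exact hX
          rw [Multiset.map_cons, hx] at this
          rw [← Multiset.cons_coe] at this
          exact (Multiset.cons_inj_right x).mp this
        · have : (↑(y :: Y') : Multiset ℕ) = (c ::ₘ C.erase c).map Prod.snd := by
            rw [← hCdec]; exact hY
          rw [Multiset.map_cons, hy] at this
          rw [← Multiset.cons_coe] at this
          exact (Multiset.cons_inj_right y).mp this
      rw [List.zip_cons_cons, ← Multiset.cons_coe, hrest, ← hceq]
      exact Multiset.cons_erase hc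

lemma filter_partition2 {α : Type*} (M : Multiset α) (R P Q : α → Prop)
    [DecidablePred R] [DecidablePred P] [DecidablePred Q]
    (h1 : ∀ s ∈ M, R s ↔ (P s ∨ Q s)) (h2 : ∀ s ∈ M, P s → Q s → False) :
    M.filter R = M.filter P + M.filter Q := by
  have hnil : M.filter (fun a => P a ∧ Q a) = 0 :=
    Multiset.filter_eq_nil.mpr fun a ha hpq => (h2 a ha hpq.1 hpq.2).elim
  rw [Multiset.filter_congr h1, Multiset.filter_add_filter, hnil, add_zero]

lemma filter_partition3 {α : Type*} (M : Multiset α) (P Q R : α → Prop)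
    [DecidablePred P] [DecidablePred Q] [DecidablePred R]
    (htri : ∀ s ∈ M, P s ∨ Q s ∨ R s)
    (hPQ : ∀ s ∈ M, P s → Q s → False) (hPR : ∀ s ∈ M, P s → R s → False)
    (hQR : ∀ s ∈ M, Q s → R s → False) :
    M = M.filter P + M.filter Q + M.filter R := by
  have h0 : M = M.filter (fun _ => True) := (Multiset.filter_eq_self.mpr fun _ _ => trivial).symm
  have h1 : M.filter (fun _ => True) = M.filter P + M.filter (fun s => Q s ∨ R s) := by
    apply filter_partition2 M _ P (fun s => Q s ∨ R s)
    · intro s hs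
      constructor
      · intro _
        rcases htri s hs with h | h | h
        · exact Or.inl h
        · exact Or.inr (Or.inl h)
        · exact Or.inr (Or.inr h)
      · intro _; trivial
    · intro s hs hP hQR'
      rcases hQR' with h | h
      · exact hPQ s hs hP h
      · exact hPR s hs hP h
  have h2 : M.filter (fun s => Q s ∨ R s) = M.filter Q + M.filter R := by
    apply filter_partition2 M _ Q R (fun s _ => Iff.rfl) hQR
  conv_lhs => rw [h0, h1, h2]
  rw [add_assoc]


lemma filter_filter_self {α : Type*} (P Q : α → Prop) [DecidablePred P] [DecidablePred Q]
    (M : Multiset α) (h : ∀ s ∈ M, Q s → P s) : (M.filter Q).filter P = M.filter Q :=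
  Multiset.filter_eq_self.mpr fun a ha =>
    h a (Multiset.mem_of_mem_filter ha) (Multiset.of_mem_filter ha)

lemma filter_filter_nil {α : Type*} (P Q : α → Prop) [DecidablePred P] [DecidablePred Q]
    (M : Multiset α) (h : ∀ s ∈ M, Q s → ¬ P s) : (M.filter Q).filter P = 0 :=
  Multiset.filter_eq_nil.mpr fun a ha =>
    h a (Multiset.mem_of_mem_filter ha) (Multiset.of_mem_filter ha)

/-- bundled hypotheses of the main situation -/
structure Good (p q : ℕ) (M : Multiset Seg) : Prop where
  hp : 1 ≤ p
  hq : 1 ≤ q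
  hM : InM (p + q) M
  hsp : specialFullAt M p

variable {p q : ℕ} {M : Multiset Seg}

lemma Good.seg (h : Good p q M) : ∀ s ∈ M, 1 ≤ s.1 ∧ s.1 ≤ s.2 ∧ s.2 ≤ p + q := h.hM.1.1

lemma Good.wt_eq (h : Good p q M) (k : ℕ) (h1 : 1 ≤ k) (h2 : k ≤ p + q) :
    wt M k = p + q + 1 := h.hM.1.2 k h1 h2

lemma Good.cardC (h : Good p q M) :
    (M.filter (fun s : Seg => s.1 ≤ p ∧ p + 1 ≤ s.2)).card = p + q + 1 := by
  have hf := h.hsp.1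
  rw [fullAt] at hf
  have hq := h.hq
  rw [hf, h.wt_eq p h.hp (by omega), h.wt_eq (p + 1) (by omega) (by omega), min_self]

lemma Good.cross_eq_contains (h : Good p q M) :
    M.filter (fun s : Seg => s.1 ≤ p ∧ p ≤ s.2) =
      M.filter (fun s : Seg => s.1 ≤ p ∧ p + 1 ≤ s.2) := by
  have hle : M.filter (fun s : Seg => s.1 ≤ p ∧ p + 1 ≤ s.2) ≤
      M.filter (fun s : Seg => s.1 ≤ p ∧ p ≤ s.2) :=
    Multiset.monotone_filter_right M (fun b hb => ⟨hb.1, by omega⟩)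
  have hcard : (M.filter (fun s : Seg => s.1 ≤ p ∧ p ≤ s.2)).card = p + q + 1 :=
    h.wt_eq p h.hp (by omega)
  exact (Multiset.eq_of_le_of_card_le hle (by rw [hcard, h.cardC])).symm

lemma Good.cross_eq_contains' (h : Good p q M) :
    M.filter (fun s : Seg => s.1 ≤ p + 1 ∧ p + 1 ≤ s.2) =
      M.filter (fun s : Seg => s.1 ≤ p ∧ p + 1 ≤ s.2) := by
  have hle : M.filter (fun s : Seg => s.1 ≤ p ∧ p + 1 ≤ s.2) ≤
      M.filter (fun s : Seg => s.1 ≤ p + 1 ∧ p + 1 ≤ s.2) :=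
    Multiset.monotone_filter_right M (fun b hb => ⟨by omega, hb.2⟩)
  have hq := h.hq
  have hcard : (M.filter (fun s : Seg => s.1 ≤ p + 1 ∧ p + 1 ≤ s.2)).card = p + q + 1 :=
    h.wt_eq (p + 1) (by omega) (by omega)
  exact (Multiset.eq_of_le_of_card_le hle (by rw [hcard, h.cardC])).symm

lemma Good.no_end_p (h : Good p q M) : ∀ s ∈ M, s.1 ≤ p → p ≤ s.2 → p + 1 ≤ s.2 := by
  intro s hs h1 h2
  have : s ∈ M.filter (fun s : Seg => s.1 ≤ p ∧ p ≤ s.2) :=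
    Multiset.mem_filter_of_mem hs ⟨h1, h2⟩
  rw [h.cross_eq_contains] at this
  exact (Multiset.of_mem_filter this).2

lemma Good.no_start_p1 (h : Good p q M) : ∀ s ∈ M, s.1 ≤ p + 1 → p + 1 ≤ s.2 → s.1 ≤ p := by
  intro s hs h1 h2
  have : s ∈ M.filter (fun s : Seg => s.1 ≤ p + 1 ∧ p + 1 ≤ s.2) :=
    Multiset.mem_filter_of_mem hs ⟨h1, h2⟩
  rw [h.cross_eq_contains'] at this
  exact (Multiset.of_mem_filter this).1

lemma Good.decomp (h : Good p q M) :
    M = M.filter (fun s : Seg => s.2 < p) + M.filter (fun s : Seg => s.1 ≤ p ∧ p + 1 ≤ s.2)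
      + M.filter (fun s : Seg => p + 2 ≤ s.1) := by
  apply filter_partition3
  · intro s hs
    obtain ⟨hs1, hs2, _⟩ := h.seg s hs
    by_cases hA : s.2 < p
    · exact Or.inl hA
    · push_neg at hA
      by_cases hC : s.1 ≤ p
      · exact Or.inr (Or.inl ⟨hC, h.no_end_p s hs hC hA⟩)
      · push_neg at hC
        right; right
        by_contra hcon
        push_neg at hcon
        have hx1 : s.1 = p + 1 := by omega
        have hx2 : p + 1 ≤ s.2 := by omega
        have := h.no_start_p1 s hs (by omega) hx2
        omega
  · intro s hs hP hQ; omega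
  · intro s hs hP hQ
    obtain ⟨_, hs2, _⟩ := h.seg s hs
    omega
  · intro s hs hP hQ; omega

lemma enders_le_one {n : ℕ} {M : Multiset Seg} (hM : InM n M) (j : ℕ) (h1 : 1 ≤ j)
    (h2 : j < n) : (M.filter (fun s : Seg => s.2 = j)).card ≤ 1 := by
  have hpart : M.filter (fun s : Seg => s.1 ≤ j ∧ j ≤ s.2) =
      M.filter (fun s : Seg => s.2 = j) + M.filter (fun s : Seg => s.1 ≤ j ∧ j + 1 ≤ s.2) := by
    apply filter_partition2
    · intro s hs
      obtain ⟨_, hs2, _⟩ := hM.1.1 s hs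
      constructor
      · intro ⟨ha, hb⟩; omega
      · intro hab; rcases hab with hx | ⟨hx, hy⟩ <;> omega
    · intro s hs hx hy; omega
  have hwt : wt M j = n + 1 := hM.1.2 j h1 (by omega)
  have hcut := hM.2 j h1 h2
  have hwt1 : wt M (j + 1) = n + 1 := hM.1.2 (j + 1) (by omega) (by omega)
  rw [hwt, hwt1, min_self] at hcut
  have := congrArg Multiset.card hpart
  rw [Multiset.card_add] at this
  rw [wt] at hwt
  omega

lemma starters_le_one {n : ℕ} {M : Multiset Seg} (hM : InM n M) (j : ℕ) (h1 : 1 ≤ j)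
    (h2 : j < n) : (M.filter (fun s : Seg => s.1 = j + 1)).card ≤ 1 := by
  have hpart : M.filter (fun s : Seg => s.1 ≤ j + 1 ∧ j + 1 ≤ s.2) =
      M.filter (fun s : Seg => s.1 = j + 1) + M.filter (fun s : Seg => s.1 ≤ j ∧ j + 1 ≤ s.2) := by
    apply filter_partition2
    · intro s hs
      obtain ⟨_, hs2, _⟩ := hM.1.1 s hs
      constructor
      · intro ⟨ha, hb⟩; omega
      · intro hab; rcases hab with hx | ⟨hx, hy⟩ <;> omega
    · intro s hs hx hy; omega
  have hcut := hM.2 j h1 h2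
  have hwt : wt M j = n + 1 := hM.1.2 j h1 (by omega)
  have hwt1 : wt M (j + 1) = n + 1 := hM.1.2 (j + 1) (by omega) (by omega)
  rw [hwt, hwt1, min_self] at hcut
  have := congrArg Multiset.card hpart
  rw [Multiset.card_add] at this
  rw [wt] at hwt1
  omega

lemma card_low {n : ℕ} {M : Multiset Seg} (hM : InM n M) :
    ∀ j, j ≤ n → (M.filter (fun s : Seg => s.2 < j)).card ≤ j - 1 := by
  intro j
  induction j with
  | zero =>
    intro _
    rw [Multiset.filter_eq_nil.mpr (fun s _ => by omega)]
    simp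
  | succ j ih =>
    intro hj
    have hpart : M.filter (fun s : Seg => s.2 < j + 1) =
        M.filter (fun s : Seg => s.2 < j) + M.filter (fun s : Seg => s.2 = j) := by
      apply filter_partition2
      · intro s _; omega
      · intro s _ hx hy; omega
    rw [hpart, Multiset.card_add]
    rcases Nat.eq_zero_or_pos j with rfl | hjpos
    · have : M.filter (fun s : Seg => s.2 = 0) = 0 := by
        apply Multiset.filter_eq_nil.mpr
        intro s hs
        obtain ⟨h1, h2, _⟩ := hM.1.1 s hs
        omega
      rw [this]
      have : M.filter (fun s : Seg => s.2 < 0) = 0 :=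
        Multiset.filter_eq_nil.mpr (fun s _ => by omega)
      rw [this]
      simp
    · have h1 := ih (by omega)
      have h2 := enders_le_one hM j hjpos (by omega)
      omega

lemma card_high {n : ℕ} {M : Multiset Seg} (hM : InM n M) :
    ∀ d j, j + d = n → 1 ≤ j → (M.filter (fun s : Seg => j + 1 ≤ s.1)).card ≤ d := by
  intro d
  induction d with
  | zero =>
    intro j hj _
    rw [Multiset.filter_eq_nil.mpr (fun s hs => by
      obtain ⟨_, h2, h3⟩ := hM.1.1 s hs; omega)]
    simp
  | succ d ih =>
    intro j hj h1
    have hpart : M.filter (fun s : Seg => j + 1 ≤ s.1) =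
        M.filter (fun s : Seg => s.1 = j + 1) + M.filter (fun s : Seg => j + 1 + 1 ≤ s.1) := by
      apply filter_partition2
      · intro s _; omega
      · intro s _ hx hy; omega
    rw [hpart, Multiset.card_add]
    have h2 := starters_le_one hM j h1 (by omega)
    have h3 := ih (j + 1) (by omega) (by omega)
    omega

lemma Good.cardA (h : Good p q M) :
    (M.filter (fun s : Seg => s.2 < p)).card ≤ p - 1 :=
  card_low h.hM p (by omega)

lemma Good.cardB (h : Good p q M) :
    (M.filter (fun s : Seg => p + 2 ≤ s.1)).card ≤ q - 1 := by
  have hq := h.hq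
  have := card_high h.hM (q - 1) (p + 1) (by omega) (by omega)
  calc (M.filter (fun s : Seg => p + 2 ≤ s.1)).card
      = (M.filter (fun s : Seg => p + 1 + 1 ≤ s.1)).card := by
        rw [Multiset.filter_congr
          (fun s _ => (by omega : p + 2 ≤ s.1 ↔ p + 1 + 1 ≤ s.1))]
    _ ≤ q - 1 := this

lemma Good.nestC (h : Good p q M) :
    IsNest (M.filter (fun s : Seg => s.1 ≤ p ∧ p + 1 ≤ s.2)) := by
  intro a ha b hb
  exact h.hsp.2 a (Multiset.mem_of_mem_filter ha) b (Multiset.mem_of_mem_filter hb)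
    (by have := Multiset.of_mem_filter ha; exact ⟨this.1, this.2⟩)
    (by have := Multiset.of_mem_filter hb; exact ⟨this.1, this.2⟩)

lemma Good.segC (h : Good p q M) :
    ∀ s ∈ M.filter (fun s : Seg => s.1 ≤ p ∧ p + 1 ≤ s.2),
      1 ≤ s.1 ∧ s.1 ≤ p ∧ p + 1 ≤ s.2 ∧ s.2 ≤ p + q := by
  intro s hs
  obtain ⟨h1, _, h3⟩ := h.seg s (Multiset.mem_of_mem_filter hs)
  obtain ⟨h4, h5⟩ := Multiset.of_mem_filter hs
  exact ⟨h1, h4, h5, h3⟩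

lemma Good.wt_decomp (h : Good p q M) (k : ℕ) :
    wt M k = wt (M.filter (fun s : Seg => s.2 < p)) k
      + wt (M.filter (fun s : Seg => s.1 ≤ p ∧ p + 1 ≤ s.2)) k
      + wt (M.filter (fun s : Seg => p + 2 ≤ s.1)) k := by
  conv_lhs => rw [h.decomp]
  rw [wt_add, wt_add]

lemma Good.countC1 (h : Good p q M) :
    Multiset.replicate q ((1 : ℕ), p) ≤
      (M.filter (fun s : Seg => s.1 ≤ p ∧ p + 1 ≤ s.2)).map (fun c => (c.1, p)) := by
  have hp := h.hp
  have hq := h.hq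
  rw [Multiset.le_iff_count]
  intro a
  rw [Multiset.count_replicate]
  split_ifs with ha
  · subst ha
    rw [Multiset.count_map]
    have hcongr : (M.filter (fun s : Seg => s.1 ≤ p ∧ p + 1 ≤ s.2)).filter
          (fun c => ((1 : ℕ), p) = (c.1, p)) =
        (M.filter (fun s : Seg => s.1 ≤ p ∧ p + 1 ≤ s.2)).filter (fun c : Seg => c.1 = 1) :=
      Multiset.filter_congr (fun s _ => by simp [Prod.ext_iff, eq_comm])
    rw [hcongr]
    -- weight count at column 1
    have hw := h.wt_decomp 1
    rw [h.wt_eq 1 le_rfl (by omega)] at hw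
    have hB0 : wt (M.filter (fun s : Seg => p + 2 ≤ s.1)) 1 = 0 := by
      rw [wt, Multiset.filter_eq_nil.mpr, Multiset.card_zero]
      intro s hs hcon
      have := Multiset.of_mem_filter hs
      omega
    have hA : wt (M.filter (fun s : Seg => s.2 < p)) 1 ≤ p - 1 :=
      le_trans (Multiset.card_le_card (Multiset.filter_le _ _)) h.cardA
    have hCw : wt (M.filter (fun s : Seg => s.1 ≤ p ∧ p + 1 ≤ s.2)) 1 =
        ((M.filter (fun s : Seg => s.1 ≤ p ∧ p + 1 ≤ s.2)).filter
          (fun c : Seg => c.1 = 1)).card := by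
      rw [wt]
      congr 1
      apply Multiset.filter_congr
      intro s hs
      obtain ⟨h1, _, h3, _⟩ := h.segC s hs
      omega
    rw [hCw] at hw
    omega
  · exact Nat.zero_le _

lemma Good.countCn (h : Good p q M) :
    Multiset.replicate p ((1 : ℕ), q) ≤
      (M.filter (fun s : Seg => s.1 ≤ p ∧ p + 1 ≤ s.2)).map (fun c => (1, c.2 - p)) := by
  have hp := h.hp
  have hq := h.hq
  rw [Multiset.le_iff_count]
  intro a
  rw [Multiset.count_replicate]
  split_ifs with ha
  · subst ha
    rw [Multiset.count_map]
    have hcongr : (M.filter (fun s : Seg => s.1 ≤ p ∧ p + 1 ≤ s.2)).filter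
          (fun c => ((1 : ℕ), q) = (1, c.2 - p)) =
        (M.filter (fun s : Seg => s.1 ≤ p ∧ p + 1 ≤ s.2)).filter
          (fun c : Seg => c.2 = p + q) := by
      apply Multiset.filter_congr
      intro s hs
      obtain ⟨_, _, h3, h4⟩ := h.segC s hs
      simp only [Prod.ext_iff, true_and]
      omega
    rw [hcongr]
    have hw := h.wt_decomp (p + q)
    rw [h.wt_eq (p + q) (by omega) le_rfl] at hw
    have hA0 : wt (M.filter (fun s : Seg => s.2 < p)) (p + q) = 0 := by
      rw [wt, Multiset.filter_eq_nil.mpr, Multiset.card_zero]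
      intro s hs hcon
      have := Multiset.of_mem_filter hs
      omega
    have hB : wt (M.filter (fun s : Seg => p + 2 ≤ s.1)) (p + q) ≤ q - 1 :=
      le_trans (Multiset.card_le_card (Multiset.filter_le _ _)) h.cardB
    have hCw : wt (M.filter (fun s : Seg => s.1 ≤ p ∧ p + 1 ≤ s.2)) (p + q) =
        ((M.filter (fun s : Seg => s.1 ≤ p ∧ p + 1 ≤ s.2)).filter
          (fun c : Seg => c.2 = p + q)).card := by
      rw [wt]
      congr 1
      apply Multiset.filter_congr
      intro s hs
      obtain ⟨h1, h2, h3, h4⟩ := h.segC s hs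
      omega
    rw [hCw] at hw
    omega
  · exact Nat.zero_le _

lemma Good.leftRes_eq (h : Good p q M) :
    leftRes (p + q) p M =
      M.filter (fun s : Seg => s.2 < p)
        + ((M.filter (fun s : Seg => s.1 ≤ p ∧ p + 1 ≤ s.2)).map (fun c => (c.1, p))
            - Multiset.replicate q ((1 : ℕ), p)) := by
  have hfil : M.filter (fun s : Seg => s.1 ≤ p) =
      M.filter (fun s : Seg => s.2 < p)
        + M.filter (fun s : Seg => s.1 ≤ p ∧ p + 1 ≤ s.2) := by
    conv_lhs => rw [h.decomp]
    rw [Multiset.filter_add, Multiset.filter_add]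
    rw [filter_filter_self (fun s : Seg => s.1 ≤ p) (fun s : Seg => s.2 < p) M
      (fun s hs hQ => by obtain ⟨_, h2, _⟩ := h.seg s hs; omega)]
    rw [filter_filter_self (fun s : Seg => s.1 ≤ p) (fun s : Seg => s.1 ≤ p ∧ p + 1 ≤ s.2) M
      (fun s hs hQ => hQ.1)]
    rw [filter_filter_nil (fun s : Seg => s.1 ≤ p) (fun s : Seg => p + 2 ≤ s.1) M
      (fun s hs hQ => by omega), add_zero]
  have hmapA : (M.filter (fun s : Seg => s.2 < p)).map (fun s : Seg => (s.1, min s.2 p)) =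
      M.filter (fun s : Seg => s.2 < p) := by
    rw [Multiset.map_congr rfl (fun s hs => by
      have := Multiset.of_mem_filter hs
      show (s.1, min s.2 p) = id s
      rw [min_eq_left (le_of_lt this)]
      rfl), Multiset.map_id]
  have hmapC : (M.filter (fun s : Seg => s.1 ≤ p ∧ p + 1 ≤ s.2)).map
        (fun s : Seg => (s.1, min s.2 p)) =
      (M.filter (fun s : Seg => s.1 ≤ p ∧ p + 1 ≤ s.2)).map (fun c => (c.1, p)) := by
    apply Multiset.map_congr rfl
    intro s hs
    have := (Multiset.of_mem_filter hs).2
    rw [min_eq_right (by omega)]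
  rw [leftRes, Nat.add_sub_cancel_left, hfil, Multiset.map_add, hmapA, hmapC]
  exact add_tsub_assoc_of_le h.countC1 _

lemma Good.rightRes_eq (h : Good p q M) :
    rightRes (p + q) q M =
      ((M.filter (fun s : Seg => s.1 ≤ p ∧ p + 1 ≤ s.2)).map (fun c => (1, c.2 - p))
          - Multiset.replicate p ((1 : ℕ), q))
        + (M.filter (fun s : Seg => p + 2 ≤ s.1)).map (fun s : Seg => (s.1 - p, s.2 - p)) := by
  have hnk : p + q - q = p := by omega
  rw [rightRes, hnk]
  have hfil : M.filter (fun s : Seg => p + 1 ≤ s.2) =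
      M.filter (fun s : Seg => s.1 ≤ p ∧ p + 1 ≤ s.2)
        + M.filter (fun s : Seg => p + 2 ≤ s.1) := by
    conv_lhs => rw [h.decomp]
    rw [Multiset.filter_add, Multiset.filter_add]
    rw [filter_filter_nil (fun s : Seg => p + 1 ≤ s.2) (fun s : Seg => s.2 < p) M
      (fun s hs hQ => by omega)]
    rw [filter_filter_self (fun s : Seg => p + 1 ≤ s.2) (fun s : Seg => s.1 ≤ p ∧ p + 1 ≤ s.2) M
      (fun s hs hQ => hQ.2)]
    rw [filter_filter_self (fun s : Seg => p + 1 ≤ s.2) (fun s : Seg => p + 2 ≤ s.1) M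
      (fun s hs hQ => by obtain ⟨_, h2, _⟩ := h.seg s hs; omega), zero_add]
  have hmapC : (M.filter (fun s : Seg => s.1 ≤ p ∧ p + 1 ≤ s.2)).map
        (fun s : Seg => (max s.1 (p + 1) - p, s.2 - p)) =
      (M.filter (fun s : Seg => s.1 ≤ p ∧ p + 1 ≤ s.2)).map (fun c => (1, c.2 - p)) := by
    apply Multiset.map_congr rfl
    intro s hs
    have := (Multiset.of_mem_filter hs).1
    rw [max_eq_right (by omega)]
    congr 1
    omega
  have hmapB : (M.filter (fun s : Seg => p + 2 ≤ s.1)).map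
        (fun s : Seg => (max s.1 (p + 1) - p, s.2 - p)) =
      (M.filter (fun s : Seg => p + 2 ≤ s.1)).map (fun s : Seg => (s.1 - p, s.2 - p)) := by
    apply Multiset.map_congr rfl
    intro s hs
    have := Multiset.of_mem_filter hs
    rw [max_eq_left (by omega)]
  rw [hfil, Multiset.map_add, hmapC, hmapB]
  rw [add_comm ((M.filter (fun s : Seg => s.1 ≤ p ∧ p + 1 ≤ s.2)).map (fun c => (1, c.2 - p)))]
  rw [add_tsub_assoc_of_le h.countCn _]
  rw [add_comm]

lemma map_id_of {α : Type*} (M : Multiset α) (f : α → α) (h : ∀ x ∈ M, f x = x) :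
    M.map f = M := by
  rw [Multiset.map_congr (g := id) rfl h, Multiset.map_id]

lemma concat_recon (p q : ℕ) (hp : 1 ≤ p) (hq : 1 ≤ q)
    (A C B E F : Multiset Seg)
    (hAsnd : ∀ s ∈ A, s.2 < p)
    (hBfst : ∀ s ∈ B, p + 2 ≤ s.1) (hBsnd : ∀ s ∈ B, s.1 ≤ s.2)
    (hCseg : ∀ s ∈ C, s.1 ≤ p ∧ p + 1 ≤ s.2)
    (hnest : IsNest C)
    (hE : E + Multiset.replicate q ((1 : ℕ), p) = C.map (fun c => (c.1, p)))
    (hF : F + Multiset.replicate p ((1 : ℕ), q) = C.map (fun c => (1, c.2 - p))) :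
    concatMS p q (A + E) (F + B.map (fun s : Seg => (s.1 - p, s.2 - p))) = A + C + B := by
  have hEmem : ∀ s ∈ E, s.2 = p := by
    intro s hs
    have : s ∈ C.map (fun c => (c.1, p)) := by
      rw [← hE]; exact Multiset.mem_of_le (Multiset.le_add_right _ _) hs
    obtain ⟨c, _, rfl⟩ := Multiset.mem_map.mp this
    rfl
  have hFmem : ∀ s ∈ F, s.1 = 1 := by
    intro s hs
    have : s ∈ C.map (fun c => (1, c.2 - p)) := by
      rw [← hF]; exact Multiset.mem_of_le (Multiset.le_add_right _ _) hs
    obtain ⟨c, _, rfl⟩ := Multiset.mem_map.mp this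
    rfl
  have hBmem : ∀ s ∈ B.map (fun s : Seg => (s.1 - p, s.2 - p)), 1 < s.1 := by
    intro s hs
    obtain ⟨b, hb, rfl⟩ := Multiset.mem_map.mp hs
    have := hBfst b hb
    show 1 < b.1 - p
    omega
  have h1 : (A + E).filter (fun s : Seg => s.2 < p) = A := by
    rw [Multiset.filter_add, Multiset.filter_eq_self.mpr hAsnd,
      Multiset.filter_eq_nil.mpr (fun s hs => by have := hEmem s hs; omega), add_zero]
  have h2 : (F + B.map (fun s : Seg => (s.1 - p, s.2 - p))).filter
      (fun s : Seg => 1 < s.1) = B.map (fun s : Seg => (s.1 - p, s.2 - p)) := by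
    rw [Multiset.filter_add, Multiset.filter_eq_nil.mpr
        (fun s hs => by have := hFmem s hs; omega),
      Multiset.filter_eq_self.mpr hBmem, zero_add]
  have h2' : (B.map (fun s : Seg => (s.1 - p, s.2 - p))).map
      (fun s : Seg => (s.1 + p, s.2 + p)) = B := by
    rw [Multiset.map_map]
    apply map_id_of
    intro b hb
    have h1 := hBfst b hb
    have h2 := hBsnd b hb
    obtain ⟨x, y⟩ := b
    simp only at h1 h2
    simp only [Function.comp_apply, Prod.mk.injEq]
    omega
  have h3 : (A + E).filter (fun s : Seg => s.2 = p) = E := by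
    rw [Multiset.filter_add, Multiset.filter_eq_nil.mpr
        (fun s hs => by have := hAsnd s hs; omega),
      Multiset.filter_eq_self.mpr hEmem, zero_add]
  have h4 : (F + B.map (fun s : Seg => (s.1 - p, s.2 - p))).filter
      (fun s : Seg => s.1 = 1) = F := by
    rw [Multiset.filter_add, Multiset.filter_eq_self.mpr hFmem,
      Multiset.filter_eq_nil.mpr (fun s hs => by have := hBmem s hs; omega), add_zero]
  have hX : E.map Prod.fst + Multiset.replicate q 1 = C.map Prod.fst := by
    have := congrArg (Multiset.map Prod.fst) hE
    rw [Multiset.map_add, Multiset.map_replicate, Multiset.map_map] at this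
    rw [this]
    exact Multiset.map_congr rfl (fun _ _ => rfl)
  have hY : F.map Prod.snd + Multiset.replicate p q = C.map (fun c : Seg => c.2 - p) := by
    have := congrArg (Multiset.map Prod.snd) hF
    rw [Multiset.map_add, Multiset.map_replicate, Multiset.map_map] at this
    rw [this]
    exact Multiset.map_congr rfl (fun _ _ => rfl)
  have hnest0 : IsNest (C.map (fun c : Seg => (c.1, c.2 - p))) := by
    intro a ha b hb
    obtain ⟨c, hc, rfl⟩ := Multiset.mem_map.mp ha
    obtain ⟨d, hd, rfl⟩ := Multiset.mem_map.mp hb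
    rcases hnest c hc d hd with ⟨u, v⟩ | ⟨u, v⟩
    · exact Or.inl ⟨u, Nat.sub_le_sub_right v p⟩
    · exact Or.inr ⟨u, Nat.sub_le_sub_right v p⟩
  have hzip : (↑(((E.map Prod.fst + Multiset.replicate q 1).sort (· ≤ ·)).reverse.zip
        ((F.map Prod.snd + Multiset.replicate p q).sort (· ≤ ·))) : Multiset Seg)
      = C.map (fun c : Seg => (c.1, c.2 - p)) := by
    apply zip_chain_eq _ _ _ hnest0
    · exact List.pairwise_reverse.mpr
        ((Multiset.pairwise_sort _ (· ≤ ·)).imp (fun h => h))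
    · exact Multiset.pairwise_sort _ _
    · rw [Multiset.coe_reverse, Multiset.sort_eq, hX, Multiset.map_map]
      exact Multiset.map_congr rfl (fun _ _ => rfl)
    · rw [Multiset.sort_eq, hY, Multiset.map_map]
      exact Multiset.map_congr rfl (fun _ _ => rfl)
  have hzfin : (↑(List.map (fun x : ℕ × ℕ => (x.1, x.2 + p))
        (((E.map Prod.fst + Multiset.replicate q 1).sort (· ≤ ·)).reverse.zip
          ((F.map Prod.snd + Multiset.replicate p q).sort (· ≤ ·)))) : Multiset Seg) = C := by
    rw [← Multiset.map_coe, hzip, Multiset.map_map]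
    apply map_id_of
    intro c hc
    have h2 := (hCseg c hc).2
    obtain ⟨x, y⟩ := c
    simp only at h2
    show (x, y - p + p) = (x, y)
    have he : y - p + p = y := by omega
    rw [he]
  rw [concatMS, if_neg (by omega), if_neg (by omega), h1, h2, h2', h3, h4, hzfin]
  exact add_right_comm A B C

lemma Good.concat_eq (h : Good p q M) :
    concatMS p q (leftRes (p + q) p M) (rightRes (p + q) q M) = M := by
  rw [h.leftRes_eq, h.rightRes_eq]
  rw [concat_recon p q h.hp h.hq (M.filter (fun s : Seg => s.2 < p))
    (M.filter (fun s : Seg => s.1 ≤ p ∧ p + 1 ≤ s.2))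
    (M.filter (fun s : Seg => p + 2 ≤ s.1)) _ _
    (fun s hs => (Multiset.mem_filter.mp hs).2)
    (fun s hs => (Multiset.mem_filter.mp hs).2)
    (fun s hs => (h.seg s (Multiset.mem_of_mem_filter hs)).2.1)
    (fun s hs => (Multiset.mem_filter.mp hs).2)
    h.nestC
    (tsub_add_cancel_of_le h.countC1) (tsub_add_cancel_of_le h.countCn)]
  exact h.decomp.symm

lemma Good.leftRes_InM (h : Good p q M) : InM p (leftRes (p + q) p M) := by
  have hp := h.hp
  have hq := h.hq
  have hEadd : (M.filter (fun s : Seg => s.1 ≤ p ∧ p + 1 ≤ s.2)).map (fun c => (c.1, p))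
      - Multiset.replicate q ((1 : ℕ), p) + Multiset.replicate q ((1 : ℕ), p)
      = (M.filter (fun s : Seg => s.1 ≤ p ∧ p + 1 ≤ s.2)).map (fun c => (c.1, p)) :=
    tsub_add_cancel_of_le h.countC1
  have hL := h.leftRes_eq
  -- weights of the left restriction
  have hwt : ∀ k, 1 ≤ k → k ≤ p → wt (leftRes (p + q) p M) k = p + 1 := by
    intro k h1 h2
    have hrep : wt (Multiset.replicate q ((1 : ℕ), p)) k = q := by
      rw [wt, card_filter_replicate]
      simp only
      rw [if_pos ⟨h1, h2⟩]
    have hCmap : wt ((M.filter (fun s : Seg => s.1 ≤ p ∧ p + 1 ≤ s.2)).map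
        (fun c => (c.1, p))) k = wt (M.filter (fun s : Seg => s.1 ≤ p ∧ p + 1 ≤ s.2)) k := by
      rw [wt_map_eq_card_filter, wt]
      exact congrArg Multiset.card (Multiset.filter_congr (fun s hs => by
        obtain ⟨u1, u2, u3, u4⟩ := h.segC s hs
        simp only
        omega))
    have hB0 : wt (M.filter (fun s : Seg => p + 2 ≤ s.1)) k = 0 := by
      rw [wt, Multiset.filter_eq_nil.mpr, Multiset.card_zero]
      intro s hs hcon
      have := (Multiset.mem_filter.mp hs).2
      omega
    have hdec := h.wt_decomp k
    rw [h.wt_eq k h1 (by omega), hB0, add_zero] at hdec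
    have hkey := congrArg (fun T => wt T k) (congrArg (fun T => T + Multiset.replicate q ((1 : ℕ), p)) hL)
    simp only [wt_add] at hkey
    rw [hrep] at hkey
    have hkey2 : wt (M.filter (fun s : Seg => s.2 < p) +
        ((M.filter (fun s : Seg => s.1 ≤ p ∧ p + 1 ≤ s.2)).map (fun c => (c.1, p))
          - Multiset.replicate q ((1 : ℕ), p))) k
        = wt (M.filter (fun s : Seg => s.2 < p)) k
          + wt ((M.filter (fun s : Seg => s.1 ≤ p ∧ p + 1 ≤ s.2)).map (fun c => (c.1, p))
          - Multiset.replicate q ((1 : ℕ), p)) k := wt_add _ _ _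
    have hkey3 := congrArg (fun T => wt T k) hEadd
    simp only [wt_add] at hkey3
    rw [hrep, hCmap] at hkey3
    omega
  refine ⟨⟨?_, fun k h1 h2 => hwt k h1 h2⟩, ?_⟩
  · -- membership
    intro s hs
    rw [hL] at hs
    rcases Multiset.mem_add.mp hs with hs | hs
    · obtain ⟨u1, u2, _⟩ := h.seg s (Multiset.mem_of_mem_filter hs)
      have := (Multiset.mem_filter.mp hs).2
      exact ⟨u1, u2, by omega⟩
    · have hsC : s ∈ (M.filter (fun s : Seg => s.1 ≤ p ∧ p + 1 ≤ s.2)).map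
          (fun c => (c.1, p)) := by
        rw [← hEadd]
        exact Multiset.mem_of_le (Multiset.le_add_right _ _) hs
      obtain ⟨c, hc, rfl⟩ := Multiset.mem_map.mp hsC
      obtain ⟨u1, u2, _, _⟩ := h.segC c hc
      exact ⟨u1, u2, le_rfl⟩
  · -- cuts
    intro k h1 h2
    have hrep : crs (Multiset.replicate q ((1 : ℕ), p)) k = q := by
      rw [crs, card_filter_replicate]
      simp only
      rw [if_pos ⟨h1, by omega⟩]
    have hCmap : crs ((M.filter (fun s : Seg => s.1 ≤ p ∧ p + 1 ≤ s.2)).map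
        (fun c => (c.1, p))) k = crs (M.filter (fun s : Seg => s.1 ≤ p ∧ p + 1 ≤ s.2)) k := by
      rw [crs_map_eq_card_filter, crs]
      exact congrArg Multiset.card (Multiset.filter_congr (fun s hs => by
        obtain ⟨u1, u2, u3, u4⟩ := h.segC s hs
        simp only
        omega))
    have hB0 : crs (M.filter (fun s : Seg => p + 2 ≤ s.1)) k = 0 := by
      rw [crs, Multiset.filter_eq_nil.mpr, Multiset.card_zero]
      intro s hs hcon
      have := (Multiset.mem_filter.mp hs).2
      omega
    have hdecM : crs M k = crs (M.filter (fun s : Seg => s.2 < p)) k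
        + crs (M.filter (fun s : Seg => s.1 ≤ p ∧ p + 1 ≤ s.2)) k
        + crs (M.filter (fun s : Seg => p + 2 ≤ s.1)) k := by
      conv_lhs => rw [h.decomp]
      rw [crs_add, crs_add]
    rw [hB0, add_zero] at hdecM
    have hcut := h.hM.2 k h1 (by omega)
    rw [h.hM.1.2 k h1 (by omega), h.hM.1.2 (k + 1) (by omega) (by omega), min_self] at hcut
    have hcut2 : p + q + 1 ≤ crs M k + 1 := hcut
    have hkey := congrArg (fun T => crs T k) (congrArg (fun T => T + Multiset.replicate q ((1 : ℕ), p)) hL)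
    simp only [crs_add] at hkey
    rw [hrep] at hkey
    have hkey2 : crs (leftRes (p + q) p M + Multiset.replicate q ((1 : ℕ), p)) k
        = crs (leftRes (p + q) p M) k + q := by rw [crs_add, hrep]
    have hkey3 := congrArg (fun T => crs T k) hEadd
    simp only [crs_add] at hkey3
    rw [hrep, hCmap] at hkey3
    have hkey4 : crs (M.filter (fun s : Seg => s.2 < p) +
        ((M.filter (fun s : Seg => s.1 ≤ p ∧ p + 1 ≤ s.2)).map (fun c => (c.1, p))
          - Multiset.replicate q ((1 : ℕ), p))) k
        = crs (M.filter (fun s : Seg => s.2 < p)) k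
          + crs ((M.filter (fun s : Seg => s.1 ≤ p ∧ p + 1 ≤ s.2)).map (fun c => (c.1, p))
          - Multiset.replicate q ((1 : ℕ), p)) k := crs_add _ _ _
    have hwt1 : wt (leftRes (p + q) p M) k = p + 1 := hwt k h1 (by omega)
    have hwt2 : wt (leftRes (p + q) p M) (k + 1) = p + 1 := hwt (k + 1) (by omega) (by omega)
    rw [hwt1, hwt2, min_self]
    show p + 1 ≤ crs (leftRes (p + q) p M) k + 1
    omega

lemma Good.segB (h : Good p q M) :
    ∀ s ∈ M.filter (fun s : Seg => p + 2 ≤ s.1),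
      p + 2 ≤ s.1 ∧ s.1 ≤ s.2 ∧ s.2 ≤ p + q := by
  intro s hs
  obtain ⟨_, u2, u3⟩ := h.seg s (Multiset.mem_of_mem_filter hs)
  exact ⟨(Multiset.mem_filter.mp hs).2, u2, u3⟩

lemma Good.rightRes_InM (h : Good p q M) : InM q (rightRes (p + q) q M) := by
  have hp := h.hp
  have hq := h.hq
  have hFadd : (M.filter (fun s : Seg => s.1 ≤ p ∧ p + 1 ≤ s.2)).map (fun c => (1, c.2 - p))
      - Multiset.replicate p ((1 : ℕ), q) + Multiset.replicate p ((1 : ℕ), q)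
      = (M.filter (fun s : Seg => s.1 ≤ p ∧ p + 1 ≤ s.2)).map (fun c => (1, c.2 - p)) :=
    tsub_add_cancel_of_le h.countCn
  have hR := h.rightRes_eq
  have hwt : ∀ k, 1 ≤ k → k ≤ q → wt (rightRes (p + q) q M) k = q + 1 := by
    intro k h1 h2
    have hrep : wt (Multiset.replicate p ((1 : ℕ), q)) k = p := by
      rw [wt, card_filter_replicate]
      simp only
      rw [if_pos ⟨h1, h2⟩]
    have hCmap : wt ((M.filter (fun s : Seg => s.1 ≤ p ∧ p + 1 ≤ s.2)).map
        (fun c => (1, c.2 - p))) k = wt (M.filter (fun s : Seg => s.1 ≤ p ∧ p + 1 ≤ s.2)) (k + p) := by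
      rw [wt_map_eq_card_filter, wt]
      exact congrArg Multiset.card (Multiset.filter_congr (fun s hs => by
        obtain ⟨u1, u2, u3, u4⟩ := h.segC s hs
        simp only
        omega))
    have hBmap : wt ((M.filter (fun s : Seg => p + 2 ≤ s.1)).map
        (fun s : Seg => (s.1 - p, s.2 - p))) k
        = wt (M.filter (fun s : Seg => p + 2 ≤ s.1)) (k + p) := by
      rw [wt_map_eq_card_filter, wt]
      exact congrArg Multiset.card (Multiset.filter_congr (fun s hs => by
        obtain ⟨u1, u2, u3⟩ := h.segB s hs
        simp only
        omega))
    have hA0 : wt (M.filter (fun s : Seg => s.2 < p)) (k + p) = 0 := by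
      rw [wt, Multiset.filter_eq_nil.mpr, Multiset.card_zero]
      intro s hs hcon
      have := (Multiset.mem_filter.mp hs).2
      omega
    have hdec := h.wt_decomp (k + p)
    rw [h.wt_eq (k + p) (by omega) (by omega), hA0] at hdec
    have hkey := congrArg (fun T => wt T k) hR
    simp only [wt_add] at hkey
    have hkey3 := congrArg (fun T => wt T k) hFadd
    simp only [wt_add] at hkey3
    rw [hrep, hCmap] at hkey3
    rw [hBmap] at hkey
    omega
  refine ⟨⟨?_, fun k h1 h2 => hwt k h1 h2⟩, ?_⟩
  · intro s hs
    rw [hR] at hs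
    rcases Multiset.mem_add.mp hs with hs | hs
    · have hsC : s ∈ (M.filter (fun s : Seg => s.1 ≤ p ∧ p + 1 ≤ s.2)).map
          (fun c => (1, c.2 - p)) := by
        rw [← hFadd]
        exact Multiset.mem_of_le (Multiset.le_add_right _ _) hs
      obtain ⟨c, hc, rfl⟩ := Multiset.mem_map.mp hsC
      obtain ⟨u1, u2, u3, u4⟩ := h.segC c hc
      exact ⟨le_rfl, by simp only; omega, by simp only; omega⟩
    · obtain ⟨b, hb, rfl⟩ := Multiset.mem_map.mp hs
      obtain ⟨u1, u2, u3⟩ := h.segB b hb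
      exact ⟨by simp only; omega, by simp only; omega, by simp only; omega⟩
  · intro k h1 h2
    have hrep : crs (Multiset.replicate p ((1 : ℕ), q)) k = p := by
      rw [crs, card_filter_replicate]
      simp only
      rw [if_pos ⟨h1, by omega⟩]
    have hCmap : crs ((M.filter (fun s : Seg => s.1 ≤ p ∧ p + 1 ≤ s.2)).map
        (fun c => (1, c.2 - p))) k
        = crs (M.filter (fun s : Seg => s.1 ≤ p ∧ p + 1 ≤ s.2)) (k + p) := by
      rw [crs_map_eq_card_filter, crs]
      exact congrArg Multiset.card (Multiset.filter_congr (fun s hs => by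
        obtain ⟨u1, u2, u3, u4⟩ := h.segC s hs
        simp only
        omega))
    have hBmap : crs ((M.filter (fun s : Seg => p + 2 ≤ s.1)).map
        (fun s : Seg => (s.1 - p, s.2 - p))) k
        = crs (M.filter (fun s : Seg => p + 2 ≤ s.1)) (k + p) := by
      rw [crs_map_eq_card_filter, crs]
      exact congrArg Multiset.card (Multiset.filter_congr (fun s hs => by
        obtain ⟨u1, u2, u3⟩ := h.segB s hs
        simp only
        omega))
    have hA0 : crs (M.filter (fun s : Seg => s.2 < p)) (k + p) = 0 := by
      rw [crs, Multiset.filter_eq_nil.mpr, Multiset.card_zero]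
      intro s hs hcon
      have := (Multiset.mem_filter.mp hs).2
      omega
    have hdecM : crs M (k + p) = crs (M.filter (fun s : Seg => s.2 < p)) (k + p)
        + crs (M.filter (fun s : Seg => s.1 ≤ p ∧ p + 1 ≤ s.2)) (k + p)
        + crs (M.filter (fun s : Seg => p + 2 ≤ s.1)) (k + p) := by
      conv_lhs => rw [h.decomp]
      rw [crs_add, crs_add]
    rw [hA0] at hdecM
    have hcut := h.hM.2 (k + p) (by omega) (by omega)
    rw [h.hM.1.2 (k + p) (by omega) (by omega),
      h.hM.1.2 (k + p + 1) (by omega) (by omega), min_self] at hcut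
    have hcut2 : p + q + 1 ≤ crs M (k + p) + 1 := hcut
    have hkey := congrArg (fun T => crs T k) hR
    simp only [crs_add] at hkey
    have hkey3 := congrArg (fun T => crs T k) hFadd
    simp only [crs_add] at hkey3
    rw [hrep, hCmap] at hkey3
    rw [hBmap] at hkey
    have hwt1 : wt (rightRes (p + q) q M) k = q + 1 := hwt k h1 (by omega)
    have hwt2 : wt (rightRes (p + q) q M) (k + 1) = q + 1 := hwt (k + 1) (by omega) (by omega)
    rw [hwt1, hwt2, min_self]
    show q + 1 ≤ crs (rightRes (p + q) q M) k + 1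
    omega

/-! ### Concatenation of two multisegments: structure of the result -/

def X0 (p q : ℕ) (M : Multiset Seg) : Multiset ℕ :=
  (M.filter (fun s : Seg => s.2 = p)).map Prod.fst + Multiset.replicate q 1

def Y0 (p q : ℕ) (N : Multiset Seg) : Multiset ℕ :=
  (N.filter (fun s : Seg => s.1 = 1)).map Prod.snd + Multiset.replicate p q

def XL (p q : ℕ) (M : Multiset Seg) : List ℕ := ((X0 p q M).sort (· ≤ ·)).reverse

def YL (p q : ℕ) (N : Multiset Seg) : List ℕ := (Y0 p q N).sort (· ≤ ·)

def Zp (p q : ℕ) (M N : Multiset Seg) : Multiset Seg :=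
  ↑(List.map (fun x : ℕ × ℕ => (x.1, x.2 + p)) ((XL p q M).zip (YL p q N)))

lemma concat_expand (p q : ℕ) (M N : Multiset Seg) (hp : p ≠ 0) (hq : q ≠ 0) :
    concatMS p q M N = M.filter (fun s : Seg => s.2 < p)
      + (N.filter (fun s : Seg => 1 < s.1)).map (fun s : Seg => (s.1 + p, s.2 + p))
      + Zp p q M N := by
  rw [concatMS, if_neg hp, if_neg hq]
  rfl

lemma card_filter_map {α β : Type*} (f : α → β) (Z : Multiset α) (P : β → Prop)
    [DecidablePred P] : ((Z.map f).filter P).card = (Z.filter (fun s => P (f s))).card := by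
  rw [← Multiset.countP_eq_card_filter, Multiset.countP_map]

section ConcatFacts

variable {p q : ℕ} {M N : Multiset Seg}

lemma cardD (hp : 1 ≤ p) (hM : InM p M) :
    (M.filter (fun s : Seg => s.2 = p)).card = p + 1 := by
  have hw := hM.1.2 p hp le_rfl
  rw [wt] at hw
  rw [← hw]
  exact congrArg Multiset.card (Multiset.filter_congr (fun s hs => by
    obtain ⟨u1, u2, u3⟩ := hM.1.1 s hs
    omega)).symm

lemma cardN1 (hq : 1 ≤ q) (hN : InM q N) :
    (N.filter (fun s : Seg => s.1 = 1)).card = q + 1 := by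
  have hw := hN.1.2 1 le_rfl hq
  rw [wt] at hw
  rw [← hw]
  exact congrArg Multiset.card (Multiset.filter_congr (fun s hs => by
    obtain ⟨u1, u2, u3⟩ := hN.1.1 s hs
    omega)).symm

lemma cardX0 (hp : 1 ≤ p) (hM : InM p M) : (X0 p q M).card = p + q + 1 := by
  rw [X0, Multiset.card_add, Multiset.card_map, Multiset.card_replicate, cardD hp hM]
  omega

lemma cardY0 (hq : 1 ≤ q) (hN : InM q N) : (Y0 p q N).card = p + q + 1 := by
  rw [Y0, Multiset.card_add, Multiset.card_map, Multiset.card_replicate, cardN1 hq hN]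
  omega

lemma lenXL (hp : 1 ≤ p) (hM : InM p M) : (XL p q M).length = p + q + 1 := by
  rw [XL, List.length_reverse, Multiset.length_sort]
  exact cardX0 hp hM

lemma lenYL (hq : 1 ≤ q) (hN : InM q N) : (YL p q N).length = p + q + 1 := by
  rw [YL, Multiset.length_sort]
  exact cardY0 hq hN

lemma Xel (hp : 1 ≤ p) (hM : InM p M) : ∀ x ∈ X0 p q M, 1 ≤ x ∧ x ≤ p := by
  intro x hx
  rcases Multiset.mem_add.mp hx with hx | hx
  · obtain ⟨d, hd, rfl⟩ := Multiset.mem_map.mp hx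
    obtain ⟨u1, u2, u3⟩ := hM.1.1 d (Multiset.mem_of_mem_filter hd)
    exact ⟨u1, by omega⟩
  · rw [Multiset.eq_of_mem_replicate hx]
    exact ⟨le_rfl, hp⟩

lemma Yel (hq : 1 ≤ q) (hN : InM q N) : ∀ y ∈ Y0 p q N, 1 ≤ y ∧ y ≤ q := by
  intro y hy
  rcases Multiset.mem_add.mp hy with hy | hy
  · obtain ⟨d, hd, rfl⟩ := Multiset.mem_map.mp hy
    obtain ⟨u1, u2, u3⟩ := hN.1.1 d (Multiset.mem_of_mem_filter hd)
    exact ⟨by omega, u3⟩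
  · rw [Multiset.eq_of_mem_replicate hy]
    exact ⟨hq, le_rfl⟩

lemma sortedXL : (XL p q M).Pairwise (· ≥ ·) :=
  List.pairwise_reverse.mpr ((Multiset.pairwise_sort _ (· ≤ ·)).imp (fun h => h))

lemma sortedYL : (YL p q N).Pairwise (· ≤ ·) := Multiset.pairwise_sort _ _

lemma coeXL : (↑(XL p q M) : Multiset ℕ) = X0 p q M := by
  rw [XL, Multiset.coe_reverse, Multiset.sort_eq]

lemma coeYL : (↑(YL p q N) : Multiset ℕ) = Y0 p q N := by
  rw [YL, Multiset.sort_eq]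

lemma Zfst (hp : 1 ≤ p) (hq : 1 ≤ q) (hM : InM p M) (hN : InM q N) :
    (Zp p q M N).map Prod.fst = X0 p q M := by
  rw [Zp, ← Multiset.map_coe, Multiset.map_map]
  have : ((XL p q M).zip (YL p q N) : Multiset (ℕ × ℕ)).map
      (Prod.fst ∘ fun x : ℕ × ℕ => (x.1, x.2 + p))
      = ((XL p q M).zip (YL p q N) : Multiset (ℕ × ℕ)).map Prod.fst :=
    Multiset.map_congr rfl (fun _ _ => rfl)
  rw [this, Multiset.map_coe, List.map_fst_zip (by rw [lenXL hp hM, lenYL hq hN] : (XL p q M).length ≤ (YL p q N).length)]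
  exact coeXL

lemma Zsnd (hp : 1 ≤ p) (hq : 1 ≤ q) (hM : InM p M) (hN : InM q N) :
    (Zp p q M N).map Prod.snd = (Y0 p q N).map (fun y => y + p) := by
  rw [Zp, ← Multiset.map_coe, Multiset.map_map]
  have : ((XL p q M).zip (YL p q N) : Multiset (ℕ × ℕ)).map
      (Prod.snd ∘ fun x : ℕ × ℕ => (x.1, x.2 + p))
      = (((XL p q M).zip (YL p q N) : Multiset (ℕ × ℕ)).map Prod.snd).map (fun y => y + p) := by
    rw [Multiset.map_map]
    exact Multiset.map_congr rfl (fun _ _ => rfl)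
  rw [this, Multiset.map_coe, List.map_snd_zip (by rw [lenXL hp hM, lenYL hq hN] : (YL p q N).length ≤ (XL p q M).length)]
  rw [coeYL]

lemma cardZ (hp : 1 ≤ p) (hq : 1 ≤ q) (hM : InM p M) (hN : InM q N) :
    (Zp p q M N).card = p + q + 1 := by
  have := congrArg Multiset.card (Zfst hp hq hM hN)
  rw [Multiset.card_map] at this
  rw [this]
  exact cardX0 hp hM

lemma Zel (hp : 1 ≤ p) (hq : 1 ≤ q) (hM : InM p M) (hN : InM q N) :
    ∀ s ∈ Zp p q M N, 1 ≤ s.1 ∧ s.1 ≤ p ∧ p + 1 ≤ s.2 ∧ s.2 ≤ p + q := by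
  intro s hs
  rw [Zp, Multiset.mem_coe, List.mem_map] at hs
  obtain ⟨⟨x, y⟩, hxy, rfl⟩ := hs
  obtain ⟨hx, hy⟩ := List.of_mem_zip hxy
  have hx0 : x ∈ X0 p q M := by rw [← coeXL (p := p) (q := q) (M := M)]; exact hx
  have hy0 : y ∈ Y0 p q N := by rw [← coeYL (p := p) (q := q) (N := N)]; exact hy
  obtain ⟨a1, a2⟩ := Xel hp hM x hx0
  obtain ⟨b1, b2⟩ := Yel hq hN y hy0
  exact ⟨a1, a2, by omega, by omega⟩

lemma Znest : IsNest (Zp p q M N) := by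
  intro a ha b hb
  rw [Zp, Multiset.mem_coe, List.mem_map] at ha hb
  obtain ⟨x, hx, rfl⟩ := ha
  obtain ⟨y, hy, rfl⟩ := hb
  have hnest := zip_nest (XL p q M) (YL p q N) sortedXL sortedYL
  rcases hnest x (Multiset.mem_coe.mpr hx) y (Multiset.mem_coe.mpr hy) with ⟨u, v⟩ | ⟨u, v⟩
  · exact Or.inl ⟨u, by simp only; omega⟩
  · exact Or.inr ⟨u, by simp only; omega⟩

lemma Msplit (hM : InM p M) : M = M.filter (fun s : Seg => s.2 < p)
    + M.filter (fun s : Seg => s.2 = p) := by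
  have h0 : M = M.filter (fun _ => True) := (Multiset.filter_eq_self.mpr fun _ _ => trivial).symm
  conv_lhs => rw [h0]
  apply filter_partition2
  · intro s hs
    obtain ⟨u1, u2, u3⟩ := hM.1.1 s hs
    constructor
    · intro _; omega
    · intro _; trivial
  · intro s _ h1 h2; omega

lemma Nsplit (hN : InM q N) : N = N.filter (fun s : Seg => s.1 = 1)
    + N.filter (fun s : Seg => 1 < s.1) := by
  have h0 : N = N.filter (fun _ => True) := (Multiset.filter_eq_self.mpr fun _ _ => trivial).symm
  conv_lhs => rw [h0]
  apply filter_partition2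
  · intro s hs
    obtain ⟨u1, u2, u3⟩ := hN.1.1 s hs
    constructor
    · intro _; omega
    · intro _; trivial
  · intro s _ h1 h2; omega

lemma Bel (hq : 1 ≤ q) (hN : InM q N) :
    ∀ s ∈ (N.filter (fun s : Seg => 1 < s.1)).map (fun s : Seg => (s.1 + p, s.2 + p)),
      p + 2 ≤ s.1 ∧ s.1 ≤ s.2 ∧ s.2 ≤ p + q := by
  intro s hs
  obtain ⟨t, ht, rfl⟩ := Multiset.mem_map.mp hs
  obtain ⟨u1, u2, u3⟩ := hN.1.1 t (Multiset.mem_of_mem_filter ht)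
  have := (Multiset.mem_filter.mp ht).2
  exact ⟨by simp only; omega, by simp only; omega, by simp only; omega⟩

end ConcatFacts

section ConcatMain

variable {p q : ℕ} {M N : Multiset Seg}

lemma wtK (hp : 1 ≤ p) (hq : 1 ≤ q) (hM : InM p M) (hN : InM q N) :
    ∀ k, 1 ≤ k → k ≤ p + q →
      wt (M.filter (fun s : Seg => s.2 < p)
        + (N.filter (fun s : Seg => 1 < s.1)).map (fun s : Seg => (s.1 + p, s.2 + p))
        + Zp p q M N) k = p + q + 1 := by
  intro k h1 h2
  rw [wt_add, wt_add]
  by_cases hk : k ≤ p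
  · have hB0 : wt ((N.filter (fun s : Seg => 1 < s.1)).map
        (fun s : Seg => (s.1 + p, s.2 + p))) k = 0 := by
      rw [wt, Multiset.filter_eq_nil.mpr, Multiset.card_zero]
      intro s hs hcon
      obtain ⟨u1, _, _⟩ := Bel hq hN s hs
      omega
    have hZ1 : wt (Zp p q M N) k = ((Zp p q M N).filter (fun s : Seg => s.1 ≤ k)).card := by
      rw [wt]
      exact congrArg Multiset.card (Multiset.filter_congr (fun s hs => by
        obtain ⟨u1, u2, u3, u4⟩ := Zel hp hq hM hN s hs
        omega))
    have hZ2 : ((Zp p q M N).filter (fun s : Seg => s.1 ≤ k)).card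
        = ((X0 p q M).filter (fun v => v ≤ k)).card := by
      rw [← Zfst hp hq hM hN, card_filter_map]
    have hZ3 : ((X0 p q M).filter (fun v => v ≤ k)).card
        = ((M.filter (fun s : Seg => s.2 = p)).filter (fun d : Seg => d.1 ≤ k)).card + q := by
      rw [X0, Multiset.filter_add, Multiset.card_add, card_filter_map, card_filter_replicate,
        if_pos h1]
    have hMk := hM.1.2 k h1 hk
    have hMsp := congrArg (fun T => wt T k) (Msplit hM)
    simp only [wt_add] at hMsp
    have hD : wt (M.filter (fun s : Seg => s.2 = p)) k
        = ((M.filter (fun s : Seg => s.2 = p)).filter (fun d : Seg => d.1 ≤ k)).card := by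
      rw [wt]
      exact congrArg Multiset.card (Multiset.filter_congr (fun s hs => by
        have := (Multiset.mem_filter.mp hs).2
        omega))
    omega
  · obtain ⟨j, rfl⟩ : ∃ j, k = p + j := ⟨k - p, by omega⟩
    have hj1 : 1 ≤ j := by omega
    have hj2 : j ≤ q := by omega
    have hA0 : wt (M.filter (fun s : Seg => s.2 < p)) (p + j) = 0 := by
      rw [wt, Multiset.filter_eq_nil.mpr, Multiset.card_zero]
      intro s hs hcon
      have := (Multiset.mem_filter.mp hs).2
      omega
    have hB : wt ((N.filter (fun s : Seg => 1 < s.1)).map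
        (fun s : Seg => (s.1 + p, s.2 + p))) (p + j)
        = wt (N.filter (fun s : Seg => 1 < s.1)) j := by
      rw [wt_map_eq_card_filter, wt]
      exact congrArg Multiset.card (Multiset.filter_congr (fun s _ => by
        simp only
        omega))
    have hZ1 : wt (Zp p q M N) (p + j) = ((Zp p q M N).filter
        (fun s : Seg => p + j ≤ s.2)).card := by
      rw [wt]
      exact congrArg Multiset.card (Multiset.filter_congr (fun s hs => by
        obtain ⟨u1, u2, u3, u4⟩ := Zel hp hq hM hN s hs
        omega))
    have hZ2 : ((Zp p q M N).filter (fun s : Seg => p + j ≤ s.2)).card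
        = (((Y0 p q N).map (fun y => y + p)).filter (fun v => p + j ≤ v)).card := by
      rw [← Zsnd hp hq hM hN, card_filter_map]
    have hZ3 : (((Y0 p q N).map (fun y => y + p)).filter (fun v => p + j ≤ v)).card
        = ((Y0 p q N).filter (fun y => j ≤ y)).card := by
      rw [card_filter_map]
      exact congrArg Multiset.card (Multiset.filter_congr (fun y _ => by omega))
    have hZ4 : ((Y0 p q N).filter (fun y => j ≤ y)).card
        = ((N.filter (fun s : Seg => s.1 = 1)).filter (fun t : Seg => j ≤ t.2)).card + p := by
      rw [Y0, Multiset.filter_add, Multiset.card_add, card_filter_map, card_filter_replicate,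
        if_pos hj2]
    have hNj := hN.1.2 j hj1 hj2
    have hNsp := congrArg (fun T => wt T j) (Nsplit hN)
    simp only [wt_add] at hNsp
    have hN1 : wt (N.filter (fun s : Seg => s.1 = 1)) j
        = ((N.filter (fun s : Seg => s.1 = 1)).filter (fun t : Seg => j ≤ t.2)).card := by
      rw [wt]
      exact congrArg Multiset.card (Multiset.filter_congr (fun s hs => by
        have := (Multiset.mem_filter.mp hs).2
        omega))
    omega

lemma crossK (hp : 1 ≤ p) (hq : 1 ≤ q) (hM : InM p M) (hN : InM q N) :
    (M.filter (fun s : Seg => s.2 < p)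
      + (N.filter (fun s : Seg => 1 < s.1)).map (fun s : Seg => (s.1 + p, s.2 + p))
      + Zp p q M N).filter (fun s : Seg => s.1 ≤ p ∧ p + 1 ≤ s.2) = Zp p q M N := by
  rw [Multiset.filter_add, Multiset.filter_add]
  have e1 : (M.filter (fun s : Seg => s.2 < p)).filter
      (fun s : Seg => s.1 ≤ p ∧ p + 1 ≤ s.2) = 0 :=
    Multiset.filter_eq_nil.mpr (fun s hs hcon => by
      have := (Multiset.mem_filter.mp hs).2
      omega)
  have e2 : ((N.filter (fun s : Seg => 1 < s.1)).map
      (fun s : Seg => (s.1 + p, s.2 + p))).filter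
      (fun s : Seg => s.1 ≤ p ∧ p + 1 ≤ s.2) = 0 :=
    Multiset.filter_eq_nil.mpr (fun s hs hcon => by
      obtain ⟨u1, _, _⟩ := Bel hq hN s hs
      omega)
  have e3 : (Zp p q M N).filter (fun s : Seg => s.1 ≤ p ∧ p + 1 ≤ s.2) = Zp p q M N :=
    Multiset.filter_eq_self.mpr (fun s hs => by
      obtain ⟨u1, u2, u3, u4⟩ := Zel hp hq hM hN s hs
      exact ⟨u2, u3⟩)
  rw [e1, e2, e3, zero_add, zero_add]

lemma crsK (hp : 1 ≤ p) (hq : 1 ≤ q) (hM : InM p M) (hN : InM q N) :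
    ∀ k, 1 ≤ k → k < p + q →
      p + q ≤ crs (M.filter (fun s : Seg => s.2 < p)
        + (N.filter (fun s : Seg => 1 < s.1)).map (fun s : Seg => (s.1 + p, s.2 + p))
        + Zp p q M N) k := by
  intro k h1 h2
  rw [crs_add, crs_add]
  rcases lt_trichotomy k p with hk | hkEq | hk
  · have hB0 : crs ((N.filter (fun s : Seg => 1 < s.1)).map
        (fun s : Seg => (s.1 + p, s.2 + p))) k = 0 := by
      rw [crs, Multiset.filter_eq_nil.mpr, Multiset.card_zero]
      intro s hs hcon
      obtain ⟨u1, _, _⟩ := Bel hq hN s hs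
      omega
    have hZ1 : crs (Zp p q M N) k = ((Zp p q M N).filter (fun s : Seg => s.1 ≤ k)).card := by
      rw [crs]
      exact congrArg Multiset.card (Multiset.filter_congr (fun s hs => by
        obtain ⟨u1, u2, u3, u4⟩ := Zel hp hq hM hN s hs
        omega))
    have hZ2 : ((Zp p q M N).filter (fun s : Seg => s.1 ≤ k)).card
        = ((X0 p q M).filter (fun v => v ≤ k)).card := by
      rw [← Zfst hp hq hM hN, card_filter_map]
    have hZ3 : ((X0 p q M).filter (fun v => v ≤ k)).card
        = ((M.filter (fun s : Seg => s.2 = p)).filter (fun d : Seg => d.1 ≤ k)).card + q := by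
      rw [X0, Multiset.filter_add, Multiset.card_add, card_filter_map, card_filter_replicate,
        if_pos h1]
    have hcut := hM.2 k h1 hk
    rw [hM.1.2 k h1 (by omega), hM.1.2 (k + 1) (by omega) (by omega), min_self] at hcut
    have hcut2 : p + 1 ≤ crs M k + 1 := hcut
    have hMsp := congrArg (fun T => crs T k) (Msplit hM)
    simp only [crs_add] at hMsp
    have hD : crs (M.filter (fun s : Seg => s.2 = p)) k
        = ((M.filter (fun s : Seg => s.2 = p)).filter (fun d : Seg => d.1 ≤ k)).card := by
      rw [crs]
      exact congrArg Multiset.card (Multiset.filter_congr (fun s hs => by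
        have := (Multiset.mem_filter.mp hs).2
        omega))
    omega
  · have hkEq' : p = k := hkEq.symm
    subst hkEq'
    have hA0 : crs (M.filter (fun s : Seg => s.2 < p)) p = 0 := by
      rw [crs, Multiset.filter_eq_nil.mpr, Multiset.card_zero]
      intro s hs hcon
      have := (Multiset.mem_filter.mp hs).2
      omega
    have hB0 : crs ((N.filter (fun s : Seg => 1 < s.1)).map
        (fun s : Seg => (s.1 + p, s.2 + p))) p = 0 := by
      rw [crs, Multiset.filter_eq_nil.mpr, Multiset.card_zero]
      intro s hs hcon
      obtain ⟨u1, _, _⟩ := Bel hq hN s hs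
      omega
    have hZ : crs (Zp p q M N) p = (Zp p q M N).card := by
      rw [crs, Multiset.filter_eq_self.mpr (fun s hs => by
        obtain ⟨u1, u2, u3, u4⟩ := Zel hp hq hM hN s hs
        exact ⟨u2, u3⟩)]
    have := cardZ hp hq hM hN
    omega
  · obtain ⟨j, rfl⟩ : ∃ j, k = p + j := ⟨k - p, by omega⟩
    have hj1 : 1 ≤ j := by omega
    have hj2 : j < q := by omega
    have hA0 : crs (M.filter (fun s : Seg => s.2 < p)) (p + j) = 0 := by
      rw [crs, Multiset.filter_eq_nil.mpr, Multiset.card_zero]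
      intro s hs hcon
      have := (Multiset.mem_filter.mp hs).2
      omega
    have hB : crs ((N.filter (fun s : Seg => 1 < s.1)).map
        (fun s : Seg => (s.1 + p, s.2 + p))) (p + j)
        = crs (N.filter (fun s : Seg => 1 < s.1)) j := by
      rw [crs_map_eq_card_filter, crs]
      exact congrArg Multiset.card (Multiset.filter_congr (fun s _ => by
        simp only
        omega))
    have hZ1 : crs (Zp p q M N) (p + j) = ((Zp p q M N).filter
        (fun s : Seg => p + j + 1 ≤ s.2)).card := by
      rw [crs]
      exact congrArg Multiset.card (Multiset.filter_congr (fun s hs => by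
        obtain ⟨u1, u2, u3, u4⟩ := Zel hp hq hM hN s hs
        omega))
    have hZ2 : ((Zp p q M N).filter (fun s : Seg => p + j + 1 ≤ s.2)).card
        = (((Y0 p q N).map (fun y => y + p)).filter (fun v => p + j + 1 ≤ v)).card := by
      rw [← Zsnd hp hq hM hN, card_filter_map]
    have hZ3 : (((Y0 p q N).map (fun y => y + p)).filter (fun v => p + j + 1 ≤ v)).card
        = ((Y0 p q N).filter (fun y => j + 1 ≤ y)).card := by
      rw [card_filter_map]
      exact congrArg Multiset.card (Multiset.filter_congr (fun y _ => by omega))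
    have hZ4 : ((Y0 p q N).filter (fun y => j + 1 ≤ y)).card
        = ((N.filter (fun s : Seg => s.1 = 1)).filter (fun t : Seg => j + 1 ≤ t.2)).card
          + p := by
      rw [Y0, Multiset.filter_add, Multiset.card_add, card_filter_map, card_filter_replicate,
        if_pos (by omega : j + 1 ≤ q)]
    have hcut := hN.2 j hj1 hj2
    rw [hN.1.2 j hj1 (by omega), hN.1.2 (j + 1) (by omega) (by omega), min_self] at hcut
    have hcut2 : q + 1 ≤ crs N j + 1 := hcut
    have hNsp := congrArg (fun T => crs T j) (Nsplit hN)
    simp only [crs_add] at hNsp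
    have hN1 : crs (N.filter (fun s : Seg => s.1 = 1)) j
        = ((N.filter (fun s : Seg => s.1 = 1)).filter (fun t : Seg => j + 1 ≤ t.2)).card := by
      rw [crs]
      exact congrArg Multiset.card (Multiset.filter_congr (fun s hs => by
        have := (Multiset.mem_filter.mp hs).2
        omega))
    omega

lemma concat_InM (hp : 1 ≤ p) (hq : 1 ≤ q) (hM : InM p M) (hN : InM q N) :
    InM (p + q) (concatMS p q M N) := by
  rw [concat_expand p q M N (by omega) (by omega)]
  refine ⟨⟨?_, fun k h1 h2 => wtK hp hq hM hN k h1 h2⟩, ?_⟩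
  · intro s hs
    rcases Multiset.mem_add.mp hs with hs | hs
    · rcases Multiset.mem_add.mp hs with hs | hs
      · obtain ⟨u1, u2, u3⟩ := hM.1.1 s (Multiset.mem_of_mem_filter hs)
        exact ⟨u1, u2, by omega⟩
      · obtain ⟨u1, u2, u3⟩ := Bel hq hN s hs
        exact ⟨by omega, u2, u3⟩
    · obtain ⟨u1, u2, u3, u4⟩ := Zel hp hq hM hN s hs
      exact ⟨u1, by omega, u4⟩
  · intro k h1 h2
    have hw1 := wtK hp hq hM hN k h1 (by omega)
    have hw2 := wtK hp hq hM hN (k + 1) (by omega) (by omega)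
    rw [hw1, hw2, min_self]
    have := crsK hp hq hM hN k h1 h2
    exact le_trans (by omega) (Nat.add_le_add_right this 1)

lemma concat_special (hp : 1 ≤ p) (hq : 1 ≤ q) (hM : InM p M) (hN : InM q N) :
    specialFullAt (concatMS p q M N) p := by
  rw [concat_expand p q M N (by omega) (by omega)]
  constructor
  · rw [fullAt, crossK hp hq hM hN, cardZ hp hq hM hN]
    have hw1 := wtK hp hq hM hN p hp (by omega)
    have hw2 := wtK hp hq hM hN (p + 1) (by omega) (by omega)
    rw [show wt (M.filter (fun s : Seg => s.2 < p)
        + (N.filter (fun s : Seg => 1 < s.1)).map (fun s : Seg => (s.1 + p, s.2 + p))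
        + Zp p q M N) p = p + q + 1 from hw1, hw2, min_self]
  · intro a ha b hb hca hcb
    have ha' : a ∈ Zp p q M N := by
      rw [← crossK hp hq hM hN]
      exact Multiset.mem_filter_of_mem ha ⟨hca.1, hca.2⟩
    have hb' : b ∈ Zp p q M N := by
      rw [← crossK hp hq hM hN]
      exact Multiset.mem_filter_of_mem hb ⟨hcb.1, hcb.2⟩
    exact Znest a ha' b hb'

lemma recM_eq (hp : 1 ≤ p) (hq : 1 ≤ q) (hM : InM p M) (hN : InM q N) :
    M = (concatMS p q M N).filter (fun s : Seg => s.2 < p)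
      + (((concatMS p q M N).filter (fun s : Seg => s.1 ≤ p ∧ p + 1 ≤ s.2)).map Prod.fst
          - Multiset.replicate q 1).map (fun a => (a, p)) := by
  rw [concat_expand p q M N (by omega) (by omega)]
  have hKA : (M.filter (fun s : Seg => s.2 < p)
      + (N.filter (fun s : Seg => 1 < s.1)).map (fun s : Seg => (s.1 + p, s.2 + p))
      + Zp p q M N).filter (fun s : Seg => s.2 < p) = M.filter (fun s : Seg => s.2 < p) := by
    rw [Multiset.filter_add, Multiset.filter_add]
    have e1 : (M.filter (fun s : Seg => s.2 < p)).filter (fun s : Seg => s.2 < p)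
        = M.filter (fun s : Seg => s.2 < p) :=
      Multiset.filter_eq_self.mpr (fun s hs => (Multiset.mem_filter.mp hs).2)
    have e2 : ((N.filter (fun s : Seg => 1 < s.1)).map
        (fun s : Seg => (s.1 + p, s.2 + p))).filter (fun s : Seg => s.2 < p) = 0 :=
      Multiset.filter_eq_nil.mpr (fun s hs hcon => by
        obtain ⟨u1, u2, _⟩ := Bel hq hN s hs
        omega)
    have e3 : (Zp p q M N).filter (fun s : Seg => s.2 < p) = 0 :=
      Multiset.filter_eq_nil.mpr (fun s hs hcon => by
        obtain ⟨_, _, u3, _⟩ := Zel hp hq hM hN s hs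
        omega)
    rw [e1, e2, e3, add_zero, add_zero]
  rw [hKA, crossK hp hq hM hN, Zfst hp hq hM hN]
  rw [X0, add_tsub_cancel_right, Multiset.map_map]
  rw [map_id_of _ _ (fun d hd => by
    have := (Multiset.mem_filter.mp hd).2
    obtain ⟨x, y⟩ := d
    simp only at this
    show (x, p) = (x, y)
    rw [this])]
  exact Msplit hM

lemma recN_eq (hp : 1 ≤ p) (hq : 1 ≤ q) (hM : InM p M) (hN : InM q N) :
    N = ((((concatMS p q M N).filter (fun s : Seg => s.1 ≤ p ∧ p + 1 ≤ s.2)).map Prod.snd).map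
          (fun v => v - p) - Multiset.replicate p q).map (fun b => ((1 : ℕ), b))
      + ((concatMS p q M N).filter (fun s : Seg => p + 2 ≤ s.1)).map
          (fun s : Seg => (s.1 - p, s.2 - p)) := by
  rw [concat_expand p q M N (by omega) (by omega)]
  have hKB : (M.filter (fun s : Seg => s.2 < p)
      + (N.filter (fun s : Seg => 1 < s.1)).map (fun s : Seg => (s.1 + p, s.2 + p))
      + Zp p q M N).filter (fun s : Seg => p + 2 ≤ s.1)
      = (N.filter (fun s : Seg => 1 < s.1)).map (fun s : Seg => (s.1 + p, s.2 + p)) := by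
    rw [Multiset.filter_add, Multiset.filter_add]
    have e1 : (M.filter (fun s : Seg => s.2 < p)).filter (fun s : Seg => p + 2 ≤ s.1) = 0 :=
      Multiset.filter_eq_nil.mpr (fun s hs hcon => by
        obtain ⟨u1, u2, _⟩ := hM.1.1 s (Multiset.mem_of_mem_filter hs)
        have := (Multiset.mem_filter.mp hs).2
        omega)
    have e2 : ((N.filter (fun s : Seg => 1 < s.1)).map
        (fun s : Seg => (s.1 + p, s.2 + p))).filter (fun s : Seg => p + 2 ≤ s.1)
        = (N.filter (fun s : Seg => 1 < s.1)).map (fun s : Seg => (s.1 + p, s.2 + p)) :=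
      Multiset.filter_eq_self.mpr (fun s hs => (Bel hq hN s hs).1)
    have e3 : (Zp p q M N).filter (fun s : Seg => p + 2 ≤ s.1) = 0 :=
      Multiset.filter_eq_nil.mpr (fun s hs hcon => by
        obtain ⟨_, u2, _, _⟩ := Zel hp hq hM hN s hs
        omega)
    rw [e1, e2, e3, zero_add, add_zero]
  rw [hKB, crossK hp hq hM hN, Zsnd hp hq hM hN, Multiset.map_map]
  have hY : (Y0 p q N).map ((fun v => v - p) ∘ fun y => y + p) = Y0 p q N :=
    map_id_of _ _ (fun y _ => by show y + p - p = y; omega)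
  rw [hY, Y0, add_tsub_cancel_right, Multiset.map_map]
  rw [map_id_of _ _ (fun t ht => by
    have := (Multiset.mem_filter.mp ht).2
    obtain ⟨x, y⟩ := t
    simp only at this
    show ((1 : ℕ), y) = (x, y)
    rw [this])]
  rw [Multiset.map_map]
  rw [map_id_of _ _ (fun t ht => by
    obtain ⟨x, y⟩ := t
    obtain ⟨u1, u2, u3⟩ := hN.1.1 _ (Multiset.mem_of_mem_filter ht)
    simp only at u1 u2 u3
    show (x + p - p, y + p - p) = (x, y)
    have e1 : x + p - p = x := by omega
    have e2 : y + p - p = y := by omega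
    rw [e1, e2])]
  exact Nsplit hN

end ConcatMain

/-! ### Degenerate cases -/

lemma InM_zero {M : Multiset Seg} (hM : InM 0 M) : M = 0 :=
  Multiset.eq_zero_of_forall_notMem fun s hs => by
    obtain ⟨u1, u2, u3⟩ := hM.1.1 s hs
    omega

lemma InM_nil : InM 0 (0 : Multiset Seg) := by
  refine ⟨⟨?_, ?_⟩, ?_⟩
  · intro s hs
    simp at hs
  · intro k h1 h2
    omega
  · intro k h1 h2
    omega

lemma rightRes_p0 {q : ℕ} {M : Multiset Seg} (hseg : ∀ s ∈ M, 1 ≤ s.1 ∧ s.1 ≤ s.2) :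
    rightRes (0 + q) q M = M := by
  have e0 : (0 : ℕ) + q - q = 0 := by omega
  rw [rightRes, e0]
  rw [Multiset.replicate_zero, tsub_zero]
  rw [Multiset.filter_eq_self.mpr (fun s hs => by
    obtain ⟨u1, u2⟩ := hseg s hs
    omega)]
  apply map_id_of
  intro s hs
  obtain ⟨u1, u2⟩ := hseg s hs
  obtain ⟨x, y⟩ := s
  simp only at u1
  show (max x (0 + 1) - 0, y - 0) = (x, y)
  rw [Nat.sub_zero, Nat.sub_zero, max_eq_left (by omega : (0 : ℕ) + 1 ≤ x)]

lemma leftRes_p0 {q : ℕ} {M : Multiset Seg} (hseg : ∀ s ∈ M, 1 ≤ s.1) :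
    leftRes (0 + q) 0 M = 0 := by
  rw [leftRes]
  rw [Multiset.filter_eq_nil.mpr (fun s hs hcon => by
    have := hseg s hs
    omega)]
  rw [Multiset.map_zero, zero_tsub]

lemma leftRes_q0 {p : ℕ} {M : Multiset Seg} (hseg : ∀ s ∈ M, s.1 ≤ s.2 ∧ s.2 ≤ p) :
    leftRes (p + 0) p M = M := by
  have e0 : p + 0 - p = 0 := by omega
  rw [leftRes, e0]
  rw [Multiset.replicate_zero, tsub_zero]
  rw [Multiset.filter_eq_self.mpr (fun s hs => by
    obtain ⟨u1, u2⟩ := hseg s hs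
    omega)]
  apply map_id_of
  intro s hs
  obtain ⟨u1, u2⟩ := hseg s hs
  obtain ⟨x, y⟩ := s
  simp only at u1 u2
  show (x, min y p) = (x, y)
  rw [min_eq_left u2]

lemma rightRes_q0 {p : ℕ} {M : Multiset Seg} (hseg : ∀ s ∈ M, s.2 ≤ p + 0) :
    rightRes (p + 0) 0 M = 0 := by
  have e0 : p + 0 - 0 = p + 0 := by omega
  rw [rightRes, e0]
  rw [Multiset.filter_eq_nil.mpr (fun s hs hcon => by
    have := hseg s hs
    omega)]
  rw [Multiset.map_zero, zero_tsub]

lemma special_at_0 (N : Multiset Seg) (hseg : ∀ s ∈ N, 1 ≤ s.1) :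
    specialFullAt N 0 := by
  constructor
  · rw [fullAt]
    have h1 : N.filter (fun s : Seg => s.1 ≤ 0 ∧ 0 + 1 ≤ s.2) = 0 :=
      Multiset.filter_eq_nil.mpr (fun s hs hcon => by
        have := hseg s hs
        omega)
    have h2 : wt N 0 = 0 := by
      rw [wt, Multiset.filter_eq_nil.mpr (fun s hs hcon => by
        have := hseg s hs
        omega), Multiset.card_zero]
    rw [h1, h2, Multiset.card_zero, Nat.zero_min]
  · intro a ha b hb hca hcb
    have := hseg a ha
    omega

lemma special_at_top (p : ℕ) (M : Multiset Seg) (hseg : ∀ s ∈ M, s.2 ≤ p) :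
    specialFullAt M p := by
  constructor
  · rw [fullAt]
    have h1 : M.filter (fun s : Seg => s.1 ≤ p ∧ p + 1 ≤ s.2) = 0 :=
      Multiset.filter_eq_nil.mpr (fun s hs hcon => by
        have := hseg s hs
        omega)
    have h2 : wt M (p + 1) = 0 := by
      rw [wt, Multiset.filter_eq_nil.mpr (fun s hs hcon => by
        have := hseg s hs
        omega), Multiset.card_zero]
    rw [h1, h2, Multiset.card_zero, Nat.min_zero]
  · intro a ha b hb hca hcb
    have := hseg a ha
    omega

end StmtAux


/-- if `M ∈ M_{p+q}` has a special full column at `p` then `M`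
is the concatenation of its left restriction to `p` with its right
restriction to `q`; consequently, concatenation is a bijection from
`M_p × M_q` onto the set of multisegments of `M_{p+q}` having a special full
column at `p`. -/
theorem restriction_decomposition (p q : ℕ) :
    -- decomposition via restrictions
    (∀ M : Multiset Seg, InM (p + q) M → specialFullAt M p →
      M = concatMS p q (leftRes (p + q) p M) (rightRes (p + q) q M)) ∧
    -- the restrictions land in M_p and M_q
    (∀ M : Multiset Seg, InM (p + q) M → specialFullAt M p →
      InM p (leftRes (p + q) p M) ∧ InM q (rightRes (p + q) q M)) ∧
    -- concatenation lands in the multisegments of `M_{p+q}` special full at `p`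
    (∀ M N : Multiset Seg, InM p M → InM q N →
      InM (p + q) (concatMS p q M N) ∧ specialFullAt (concatMS p q M N) p) ∧
    -- concatenation is injective
    (∀ M N M' N' : Multiset Seg, InM p M → InM q N → InM p M' → InM q N' →
      concatMS p q M N = concatMS p q M' N' → M = M' ∧ N = N') := by
  refine ⟨?_, ?_, ?_, ?_⟩
  · -- part 1 : decomposition
    intro M hM hsp
    rcases Nat.eq_zero_or_pos p with rfl | hp
    · rw [concatMS, if_pos rfl]
      exact (StmtAux.rightRes_p0
        (fun s hs => ⟨(hM.1.1 s hs).1, (hM.1.1 s hs).2.1⟩)).symm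
    rcases Nat.eq_zero_or_pos q with rfl | hq
    · rw [concatMS, if_neg (by omega), if_pos rfl]
      exact (StmtAux.leftRes_q0 (fun s hs =>
        ⟨(hM.1.1 s hs).2.1, by have := (hM.1.1 s hs).2.2; omega⟩)).symm
    · exact (StmtAux.Good.concat_eq ⟨hp, hq, hM, hsp⟩).symm
  · -- part 2 : restrictions land in M_p and M_q
    intro M hM _hsp
    rcases Nat.eq_zero_or_pos p with rfl | hp
    · constructor
      · rw [StmtAux.leftRes_p0 (fun s hs => (hM.1.1 s hs).1)]
        exact StmtAux.InM_nil
      · rw [StmtAux.rightRes_p0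
          (fun s hs => ⟨(hM.1.1 s hs).1, (hM.1.1 s hs).2.1⟩)]
        rwa [zero_add] at hM
    rcases Nat.eq_zero_or_pos q with rfl | hq
    · constructor
      · rw [StmtAux.leftRes_q0 (fun s hs =>
          ⟨(hM.1.1 s hs).2.1, by have := (hM.1.1 s hs).2.2; omega⟩)]
        rwa [add_zero] at hM
      · rw [StmtAux.rightRes_q0 (fun s hs => (hM.1.1 s hs).2.2)]
        exact StmtAux.InM_nil
    · exact ⟨StmtAux.Good.leftRes_InM ⟨hp, hq, hM, _hsp⟩,
        StmtAux.Good.rightRes_InM ⟨hp, hq, hM, _hsp⟩⟩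
  · -- part 3 : concatenation lands in the special multisegments
    intro M N hM hN
    rcases Nat.eq_zero_or_pos p with rfl | hp
    · rw [concatMS, if_pos rfl]
      refine ⟨by rwa [zero_add], StmtAux.special_at_0 N (fun s hs => (hN.1.1 s hs).1)⟩
    rcases Nat.eq_zero_or_pos q with rfl | hq
    · rw [concatMS, if_neg (by omega), if_pos rfl]
      refine ⟨by rwa [add_zero], StmtAux.special_at_top p M (fun s hs => by
        have := (hM.1.1 s hs).2.2
        omega)⟩
    · exact ⟨StmtAux.concat_InM hp hq hM hN, StmtAux.concat_special hp hq hM hN⟩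
  · -- part 4 : injectivity
    intro M N M' N' hM hN hM' hN' heq
    rcases Nat.eq_zero_or_pos p with rfl | hp
    · rw [concatMS, concatMS, if_pos rfl, if_pos rfl] at heq
      exact ⟨(StmtAux.InM_zero hM).trans (StmtAux.InM_zero hM').symm, heq⟩
    rcases Nat.eq_zero_or_pos q with rfl | hq
    · have hp0 : ¬ (p = 0) := by omega
      rw [concatMS, concatMS, if_neg hp0, if_neg hp0, if_pos rfl, if_pos rfl] at heq
      exact ⟨heq, (StmtAux.InM_zero hN).trans (StmtAux.InM_zero hN').symm⟩
    · constructor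
      · have h1 := StmtAux.recM_eq hp hq hM hN
        have h2 := StmtAux.recM_eq hp hq hM' hN'
        rw [heq] at h1
        exact h1.trans h2.symm
      · have h1 := StmtAux.recN_eq hp hq hM hN
        have h2 := StmtAux.recN_eq hp hq hM' hN'
        rw [heq] at h1
        exact h1.trans h2.symm
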